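/- arXiv:2112.03767 — 7 statements merged into one kernel-verified Lean document; each statement's English description precedes it below -/
import Mathlib

section
/- For every integer n ≥ 1, the maximal transition probability of simple random walk on Z^2 satisfies sup_{x ∈ Z^2} P_0(S_n = x) ≤ 2/(π n). -/
open Finset

/-- The four unit steps of the planar simple random walk. -/
def dir : Fin 4 → ℤ × ℤ := ![(1,0),(-1,0),(0,1),(0,-1)]

/-- `p n x` is the probability that the simple random walk on `ℤ²` started at `0`
is at `x` at time `n`. -/
noncomputable def p (n : ℕ) (x : ℤ × ℤ) : ℝ :=
  ((Finset.univ.filter (fun m : Fin n → Fin 4 => (∑ i, dir (m i)) = x)).card : ℝ) / 4 ^ n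

section aux


noncomputable def Pm (m : ℕ) : ℝ := ∏ i ∈ Finset.range m, (2*(i:ℝ)+1)/(2*i+2)
lemma Pm_pos (m : ℕ) : 0 < Pm m := Finset.prod_pos (fun i _ => by positivity)
lemma Pm_succ (m : ℕ) : Pm (m+1) = Pm m * ((2*m+1)/(2*m+2)) := Finset.prod_range_succ _ _

lemma Pm_sq_W (m : ℕ) : Pm m ^ 2 * ((2*(m:ℝ)+1) * Real.Wallis.W m) = 1 := by
  induction m with
  | zero => simp [Pm, Real.Wallis.W]
  | succ m ih =>
    rw [Pm_succ, Real.Wallis.W_succ]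
    push_cast
    have h1 : (2*(m:ℝ)+1) ≠ 0 := by positivity
    have h2 : (2*(m:ℝ)+2) ≠ 0 := by positivity
    have h3 : (2*(m:ℝ)+3) ≠ 0 := by positivity
    field_simp
    linear_combination (2*(m:ℝ)+3) * ih

lemma Pm_sq_le (m : ℕ) (hm : 1 ≤ m) : Pm m ^ 2 ≤ 1 / (Real.pi * m) := by
  have hW := Real.Wallis.le_W m
  have hWpos := Real.Wallis.W_pos m
  have hid := Pm_sq_W m
  have hpi := Real.pi_pos
  have hm1 : (1:ℝ) ≤ m := by exact_mod_cast hm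
  have h1 : Pm m ^ 2 = 1 / ((2*(m:ℝ)+1) * Real.Wallis.W m) := by
    field_simp
    linarith [hid]
  rw [h1]
  rw [div_le_div_iff₀ (by positivity) (by positivity)]
  have key : Real.pi * m ≤ (2*(m:ℝ)+1) * ((2*(m:ℝ)+1)/(2*m+2) * (Real.pi/2)) := by
    have he : (2*(m:ℝ)+1) * ((2*(m:ℝ)+1)/(2*m+2) * (Real.pi/2)) =
        (2*(m:ℝ)+1)^2 * Real.pi / (2*(2*m+2)) := by
      field_simp
    rw [he, le_div_iff₀ (by positivity)]
    nlinarith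
  nlinarith

lemma central_eq (m : ℕ) : ((Nat.centralBinom m : ℝ)) / 4^m = Pm m := by
  induction m with
  | zero => simp [Pm, Nat.centralBinom]
  | succ m ih =>
    have h := Nat.succ_mul_centralBinom_succ m
    have h' : ((m:ℝ)+1) * Nat.centralBinom (m+1) = 2*(2*m+1) * Nat.centralBinom m := by
      exact_mod_cast h
    rw [Pm_succ, ← ih]
    have hm1 : ((m:ℝ)+1) ≠ 0 := by positivity
    rw [pow_succ, div_mul_div_comm, div_eq_div_iff (by positivity) (by positivity)]
    push_cast
    push_cast at h'
    linear_combination 2*(4:ℝ)^m * h'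

lemma binom_sq_le (n : ℕ) (hn : 1 ≤ n) :
    ((n.choose (n/2) : ℝ))^2 / 4^n ≤ 2 / (Real.pi * n) := by
  have hpi := Real.pi_pos
  obtain ⟨m, rfl | rfl⟩ := Nat.even_or_odd' n
  · -- even case
    have hm : 1 ≤ m := by omega
    have hd : (2*m)/2 = m := by omega
    rw [hd]
    have hc : (((2*m).choose m : ℕ) : ℝ) = Nat.centralBinom m := by rw [Nat.centralBinom]
    rw [hc]
    have h4 : (4:ℝ)^(2*m) = (4^m)^2 := by rw [← pow_mul, mul_comm]
    rw [h4]
    have hPm : ((Nat.centralBinom m : ℝ))^2 / (4^m)^2 = (Pm m)^2 := by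
      rw [← div_pow, central_eq]
    rw [hPm]
    have h2 : 2 / (Real.pi * ((2*m:ℕ):ℝ)) = 1/(Real.pi * m) := by
      push_cast
      rw [div_eq_div_iff (by positivity) (by positivity)]; ring
    rw [h2]
    exact Pm_sq_le m hm
  · -- odd case
    have hd : (2*m+1)/2 = m := by omega
    rw [hd]
    have hm1 : (0:ℝ) ≤ m := Nat.cast_nonneg m
    have hsym : (2*m+1).choose m = (2*m+1).choose (m+1) := by
      have h := Nat.choose_symm (n := 2*m+1) (k := m+1) (by omega)
      simpa [show 2*m+1-(m+1) = m by omega] using h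
    have hmul := Nat.add_one_mul_choose_eq (2*m) m
    have hmul' : (2*(m:ℝ)+1) * Nat.centralBinom m = ((2*m+1).choose m : ℝ) * (m+1) := by
      rw [hsym, Nat.centralBinom]
      exact_mod_cast hmul
    have hC : (((2*m+1).choose m : ℕ) : ℝ) = (2*(m:ℝ)+1) * Nat.centralBinom m / (m+1) := by
      field_simp
      linarith [hmul']
    have hcb : (Nat.centralBinom m : ℝ) = Pm m * 4^m := by
      rw [← central_eq]
      field_simp
    have hL : (((2*m+1).choose m : ℕ) : ℝ)^2 / 4^(2*m+1) =
        (Pm m)^2 * (2*(m:ℝ)+1)^2/(4*((m:ℝ)+1)^2) := by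
      rw [hC, hcb]
      have h4 : (4:ℝ)^(2*m+1) = 4^m*4^m*4 := by
        rw [pow_succ, two_mul, pow_add]
      rw [h4]
      have h4m : (4:ℝ)^m ≠ 0 := by positivity
      field_simp
    rw [hL]
    have hcast : (((2*m+1:ℕ)):ℝ) = 2*(m:ℝ)+1 := by push_cast; ring
    rw [hcast]
    rcases Nat.eq_zero_or_pos m with rfl | hm
    · simp [Pm]
      rw [inv_eq_one_div, div_le_div_iff₀ (by positivity) (by positivity)]
      have := Real.pi_le_four
      linarith
    · have hp := Pm_sq_le m hm
      rw [le_div_iff₀ (by positivity)] at hp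
      rw [div_le_div_iff₀ (by positivity) (by positivity)]
      -- hp : Pm m ^2 * (π * m) ≤ 1 * 1? careful
      have hmR : (1:ℝ) ≤ m := by exact_mod_cast hm
      have h8 : (2*(m:ℝ)+1)^3 ≤ 8*m*((m:ℝ)+1)^2 := by nlinarith
      have ht : (0:ℝ) ≤ Pm m ^2 * Real.pi := by positivity
      nlinarith [mul_le_mul_of_nonneg_left h8 ht,
        mul_le_mul_of_nonneg_left hp (by positivity : (0:ℝ) ≤ 8*((m:ℝ)+1)^2)]


def sgn (b : Bool) : ℤ := if b then 1 else -1

lemma card_count (n k : ℕ) :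
    (univ.filter fun ε : Fin n → Bool => (univ.filter fun i => ε i = true).card = k).card
      = n.choose k := by
  have h : n.choose k = ((univ : Finset (Fin n)).powersetCard k).card := by
    rw [Finset.card_powersetCard, Finset.card_univ, Fintype.card_fin]
  rw [h]
  apply Finset.card_bij (fun ε _ => univ.filter fun i => ε i = true)
  · intro ε hε
    simp only [Finset.mem_filter, Finset.mem_univ, true_and] at hε
    rw [Finset.mem_powersetCard]
    exact ⟨Finset.subset_univ _, hε⟩
  · intro a ha b hb hab
    funext i
    have h2 := Finset.ext_iff.mp hab i
    simp only [Finset.mem_filter, Finset.mem_univ, true_and] at h2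
    revert h2
    cases a i <;> cases b i <;> simp
  · intro A hA
    rw [Finset.mem_powersetCard] at hA
    refine ⟨fun i => decide (i ∈ A), ?_, ?_⟩
    · simp only [Finset.mem_filter, Finset.mem_univ, true_and, decide_eq_true_eq]
      rw [show (univ.filter fun i => i ∈ A) = A by ext i; simp]
      exact hA.2
    · simp only [decide_eq_true_eq]
      ext i; simp

lemma sum_sgn (n : ℕ) (ε : Fin n → Bool) :
    ∑ i, sgn (ε i) = 2 * ((univ.filter fun i => ε i = true).card : ℤ) - n := by
  have h : ∀ i, sgn (ε i) = 2 * (if ε i = true then (1:ℤ) else 0) - 1 := by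
    intro i; cases hi : ε i <;> simp [sgn]
  rw [Finset.sum_congr rfl (fun i _ => h i), Finset.sum_sub_distrib, ← Finset.mul_sum,
    Finset.sum_boole, Finset.sum_const, Finset.card_univ, Fintype.card_fin]
  simp

lemma oneD_le (n : ℕ) (c : ℤ) :
    ((univ.filter fun ε : Fin n → Bool => (∑ i, sgn (ε i)) = c).card) ≤ n.choose (n/2) := by
  by_cases h : ∃ k : ℕ, c = 2*(k:ℤ) - n
  · obtain ⟨k, rfl⟩ := h
    have he : (univ.filter fun ε : Fin n → Bool => (∑ i, sgn (ε i)) = 2*(k:ℤ) - n)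
        = univ.filter fun ε => (univ.filter fun i => ε i = true).card = k := by
      apply Finset.filter_congr
      intro ε _
      rw [sum_sgn]
      omega
    rw [he, card_count]
    exact Nat.choose_le_middle k n
  · have he : (univ.filter fun ε : Fin n → Bool => (∑ i, sgn (ε i)) = c) = ∅ := by
      rw [Finset.filter_eq_empty_iff]
      intro ε _
      rw [sum_sgn]
      intro hc
      exact h ⟨_, hc.symm⟩
    rw [he]
    simp

def f4 : Fin 4 → Bool × Bool := ![(true,true),(false,false),(true,false),(false,true)]

def g4 : Bool × Bool → Fin 4 := fun z =>
  if z = (true,true) then 0 else if z = (false,false) then 1 else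
  if z = (true,false) then 2 else 3

lemma card_eq (n : ℕ) (x : ℤ × ℤ) :
    (univ.filter fun m : Fin n → Fin 4 => (∑ i, dir (m i)) = x).card =
    (univ.filter fun ε : Fin n → Bool => (∑ i, sgn (ε i)) = x.1 + x.2).card *
    (univ.filter fun ε : Fin n → Bool => (∑ i, sgn (ε i)) = x.1 - x.2).card := by
  have hfst : ∀ d, sgn ((f4 d).1) = (dir d).1 + (dir d).2 := by decide
  have hsnd : ∀ d, sgn ((f4 d).2) = (dir d).1 - (dir d).2 := by decide
  have hg : ∀ z, f4 (g4 z) = z := by decide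
  have hf4inj : Function.Injective f4 := by decide
  have hsum1 : ∀ m : Fin n → Fin 4, ∑ i, sgn ((f4 (m i)).1)
      = (∑ i, dir (m i)).1 + (∑ i, dir (m i)).2 := by
    intro m
    rw [Prod.fst_sum, Prod.snd_sum, ← Finset.sum_add_distrib]
    exact Finset.sum_congr rfl fun i _ => hfst _
  have hsum2 : ∀ m : Fin n → Fin 4, ∑ i, sgn ((f4 (m i)).2)
      = (∑ i, dir (m i)).1 - (∑ i, dir (m i)).2 := by
    intro m
    rw [Prod.fst_sum, Prod.snd_sum, ← Finset.sum_sub_distrib]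
    exact Finset.sum_congr rfl fun i _ => hsnd _
  rw [← Finset.card_product, ← Finset.filter_product, Finset.univ_product_univ]
  apply Finset.card_bij (fun m _ => ((fun i => (f4 (m i)).1, fun i => (f4 (m i)).2) :
    (Fin n → Bool) × (Fin n → Bool)))
  · intro m hm
    simp only [Finset.mem_filter, Finset.mem_univ, true_and] at hm ⊢
    rw [hsum1, hsum2, hm]
    exact ⟨rfl, rfl⟩
  · intro a ha b hb hab
    rw [Prod.mk.injEq] at hab
    funext i
    apply hf4inj
    exact Prod.ext (congrFun hab.1 i) (congrFun hab.2 i)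
  · intro q hq
    simp only [Finset.mem_filter, Finset.mem_univ, true_and] at hq
    refine ⟨fun i => g4 (q.1 i, q.2 i), ?_, ?_⟩
    · simp only [Finset.mem_filter, Finset.mem_univ, true_and]
      have h1 := hsum1 (fun i => g4 (q.1 i, q.2 i))
      have h2 := hsum2 (fun i => g4 (q.1 i, q.2 i))
      simp only [hg] at h1 h2
      rw [hq.1] at h1
      rw [hq.2] at h2
      rw [Prod.ext_iff]
      omega
    · simp only [hg]

end aux

/-- For every `n ≥ 1` and every `x ∈ ℤ²`, `p n x ≤ 2/(π n)`. -/
theorem pnstar_le (n : ℕ) (hn : 1 ≤ n) (x : ℤ × ℤ) :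
    p n x ≤ 2 / (Real.pi * n) := by
  have hb := binom_sq_le n hn
  rw [p, card_eq]
  have h1 := oneD_le n (x.1+x.2)
  have h2 := oneD_le n (x.1-x.2)
  have hmul : (univ.filter fun ε : Fin n → Bool => (∑ i, sgn (ε i)) = x.1 + x.2).card *
      (univ.filter fun ε : Fin n → Bool => (∑ i, sgn (ε i)) = x.1 - x.2).card
      ≤ n.choose (n/2) * n.choose (n/2) := Nat.mul_le_mul h1 h2
  have hle : ((( (univ.filter fun ε : Fin n → Bool => (∑ i, sgn (ε i)) = x.1 + x.2).card *
      (univ.filter fun ε : Fin n → Bool => (∑ i, sgn (ε i)) = x.1 - x.2).card : ℕ)) : ℝ)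
      ≤ ((n.choose (n/2) : ℝ))^2 := by
    calc _ ≤ ((n.choose (n/2) * n.choose (n/2) : ℕ) : ℝ) := by exact_mod_cast hmul
    _ = ((n.choose (n/2) : ℝ))^2 := by push_cast; ring
  calc _ ≤ ((n.choose (n/2) : ℝ))^2 / 4^n := by gcongr
  _ ≤ 2 / (Real.pi * n) := hb
end

section
/- The sequence b_n = √(2n+1) · 2^{-(2n+1)} · binomial(2n+1, n) is non-decreasing in n ≥ 0. -/
lemma key_sqrt_ineq (x : ℝ) (hx : 0 ≤ x) :
    2 * (x + 2) * Real.sqrt (2 * x + 1) ≤ (2 * x + 3) * Real.sqrt (2 * x + 3) := by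
  have h1 : 2 * (x + 2) * Real.sqrt (2 * x + 1)
      = Real.sqrt ((2 * (x + 2)) ^ 2 * (2 * x + 1)) := by
    rw [Real.sqrt_mul (by positivity), Real.sqrt_sq (by positivity)]
  have h2 : (2 * x + 3) * Real.sqrt (2 * x + 3) = Real.sqrt ((2 * x + 3) ^ 3) := by
    rw [show (2 * x + 3) ^ 3 = (2 * x + 3) ^ 2 * (2 * x + 3) by ring,
      Real.sqrt_mul (by positivity), Real.sqrt_sq (by positivity)]
  rw [h1, h2]
  exact Real.sqrt_le_sqrt (by nlinarith)

lemma choose_id (n : ℕ) :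
    (n + 2) * Nat.choose (2 * n + 3) (n + 1) = 2 * (2 * n + 3) * Nat.choose (2 * n + 1) n := by
  have h1 := Nat.add_one_mul_choose_eq (2 * n + 2) (n + 1)
  have h2 := Nat.add_one_mul_choose_eq (2 * n + 1) n
  have hsymm : Nat.choose (2 * n + 3) (n + 2) = Nat.choose (2 * n + 3) (n + 1) := by
    rw [← Nat.choose_symm (by omega)]
    congr 1
    omega
  have h1' : (2 * n + 3) * Nat.choose (2 * n + 2) (n + 1)
      = Nat.choose (2 * n + 3) (n + 1) * (n + 2) := by
    rw [← hsymm]; convert h1 using 2 <;> omega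
  have h2' : (2 * n + 2) * Nat.choose (2 * n + 1) n
      = Nat.choose (2 * n + 2) (n + 1) * (n + 1) := by
    convert h2 using 2 <;> omega
  nlinarith [Nat.choose_pos (show n + 1 ≤ 2 * n + 2 by omega)]

/-- The sequence `b_n = √(2n+1) · 2^{-(2n+1)} · C(2n+1, n)` is non-decreasing for `n ≥ 0`. -/
theorem odd_binom_seq_monotone (n : ℕ) :
    Real.sqrt (2 * n + 1) * (Nat.choose (2 * n + 1) n : ℝ) / 2 ^ (2 * n + 1) ≤
      Real.sqrt (2 * (n + 1) + 1) * (Nat.choose (2 * (n + 1) + 1) (n + 1) : ℝ)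
        / 2 ^ (2 * (n + 1) + 1) := by
  have x := (n : ℝ)
  set c : ℝ := (Nat.choose (2 * n + 1) n : ℝ) with hc
  set c' : ℝ := (Nat.choose (2 * (n + 1) + 1) (n + 1) : ℝ) with hc'
  have hid : ((n : ℝ) + 2) * c' = 2 * (2 * (n : ℝ) + 3) * c := by
    have := choose_id n
    have : ((n + 2) * Nat.choose (2 * n + 3) (n + 1) : ℝ)
        = (2 * (2 * n + 3) * Nat.choose (2 * n + 1) n : ℝ) := by exact_mod_cast congrArg Nat.cast this
    push_cast at this
    rw [hc, hc']
    push_cast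
    convert this using 3
    rw [show 2 * (n + 1) + 1 = 2 * n + 3 by ring]
  have hcpos : 0 < c := by
    rw [hc]; exact_mod_cast Nat.choose_pos (by omega)
  have hc'nn : 0 ≤ c' := by rw [hc']; positivity
  have harg : (2 * ((n : ℝ) + 1) + 1) = 2 * (n : ℝ) + 3 := by ring
  rw [div_le_div_iff₀ (by positivity) (by positivity)]
  have hpow : (2 : ℝ) ^ (2 * (n + 1) + 1) = 4 * 2 ^ (2 * n + 1) := by
    rw [show 2 * (n + 1) + 1 = (2 * n + 1) + 2 by ring, pow_add]; ring
  rw [hpow, harg]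
  have hkey := key_sqrt_ineq (n : ℝ) (by positivity)
  have hmul := mul_le_mul_of_nonneg_left hkey
    (show (0 : ℝ) ≤ 2 * c * 2 ^ (2 * n + 1) by positivity)
  -- goal: √(2n+1)*c*(4*2^(2n+1)) ≤ √(2n+3)*c'*2^(2n+1)
  have hn2 : (0 : ℝ) < (n : ℝ) + 2 := by positivity
  rw [← mul_le_mul_iff_right₀ hn2]
  calc ((n : ℝ) + 2) * (Real.sqrt (2 * n + 1) * c * (4 * 2 ^ (2 * n + 1)))
      = (2 * c * 2 ^ (2 * n + 1)) * (2 * ((n : ℝ) + 2) * Real.sqrt (2 * n + 1)) := by ring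
    _ ≤ (2 * c * 2 ^ (2 * n + 1)) * ((2 * (n : ℝ) + 3) * Real.sqrt (2 * n + 3)) := hmul
    _ = (2 * (2 * (n : ℝ) + 3) * c) * Real.sqrt (2 * n + 3) * 2 ^ (2 * n + 1) := by ring
    _ = (((n : ℝ) + 2) * c') * Real.sqrt (2 * n + 3) * 2 ^ (2 * n + 1) := by rw [hid]
    _ = ((n : ℝ) + 2) * (Real.sqrt (2 * n + 3) * c' * 2 ^ (2 * n + 1)) := by ring
end

section
/- Let (Y_n) be a Markov chain on a countable state space E and f : E → [0,1]. Fix k ∈ N. If η₁ := sup_{x∈E} E_x[Σ_{n=1}^k f(Y_n)] < 1, then sup_{x∈E} E_x[exp(Σ_{n=1}^k f(Y_n))] ≤ 1/(1 − e·η₁), provided e·η₁ < 1. -/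
open Finset

/-- Expectation, for the Markov chain on `E` with transition kernel `K` started at `x`,
of a functional `F` of the first `k` steps `(Y_1, …, Y_k)`. -/
noncomputable def markovExp {E : Type*} (K : E → E → ℝ) (k : ℕ) (x : E)
    (F : (Fin k → E) → ℝ) : ℝ :=
  ∑' y : Fin k → E, (∏ i : Fin k, K ((Fin.cons x y : Fin (k+1) → E) i.castSucc) (y i)) * F y

namespace KhasAux

open scoped ENNReal

variable {E : Type*}

noncomputable def Ke (K : E → E → ℝ) (x y : E) : ℝ≥0∞ := ENNReal.ofReal (K x y)

noncomputable def wE (K : E → E → ℝ) (k : ℕ) (x : E) (y : Fin k → E) : ℝ≥0∞ :=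
  ∏ i : Fin k, Ke K ((Fin.cons x y : Fin (k+1) → E) i.castSucc) (y i)

noncomputable def mE (K : E → E → ℝ) (k : ℕ) (x : E) (F : (Fin k → E) → ℝ≥0∞) : ℝ≥0∞ :=
  ∑' y, wE K k x y * F y

lemma wE_cons (K : E → E → ℝ) (k : ℕ) (x z : E) (t : Fin k → E) :
    wE K (k+1) x (Fin.cons z t) = Ke K x z * wE K k z t := by
  unfold wE
  rw [Fin.prod_univ_succ]
  simp only [Fin.castSucc_zero, Fin.cons_zero]
  congr 1

lemma wE_zero (K : E → E → ℝ) (x : E) (y : Fin 0 → E) : wE K 0 x y = 1 := by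
  simp [wE]

lemma mE_zero (K : E → E → ℝ) (x : E) (F : (Fin 0 → E) → ℝ≥0∞) :
    mE K 0 x F = F Fin.elim0 := by
  have h : ∀ y : Fin 0 → E, y = Fin.elim0 := fun y => funext fun i => i.elim0
  rw [mE, tsum_eq_single Fin.elim0 (fun b hb => absurd (h b) hb), wE_zero, one_mul]

lemma mE_succ (K : E → E → ℝ) (k : ℕ) (x : E) (F : (Fin (k+1) → E) → ℝ≥0∞) :
    mE K (k+1) x F = ∑' z, Ke K x z * mE K k z (fun t => F (Fin.cons z t)) := by
  rw [mE, ← Equiv.tsum_eq (Fin.consEquiv fun _ => E), ENNReal.tsum_prod']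
  refine tsum_congr fun z => ?_
  rw [mE, ← ENNReal.tsum_mul_left]
  refine tsum_congr fun t => ?_
  show wE K (k+1) x (Fin.cons z t) * F (Fin.cons z t) = _
  rw [wE_cons, mul_assoc]


variable {K : E → E → ℝ}

lemma Ke_norm (hK0 : ∀ x y, 0 ≤ K x y) (hK1 : ∀ x, ∑' y, K x y = 1) (x : E) :
    ∑' y, Ke K x y = 1 := by
  have hs : Summable (K x) := by
    by_contra h
    have := hK1 x
    rw [tsum_eq_zero_of_not_summable h] at this
    norm_num at this
  rw [show (fun y => Ke K x y) = fun y => ENNReal.ofReal (K x y) from rfl,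
    ← ENNReal.ofReal_tsum_of_nonneg (hK0 x) hs, hK1 x, ENNReal.ofReal_one]

lemma mE_const (hK0 : ∀ x y, 0 ≤ K x y) (hK1 : ∀ x, ∑' y, K x y = 1) (k : ℕ) (x : E)
    (c : ℝ≥0∞) : mE K k x (fun _ => c) = c := by
  induction k generalizing x with
  | zero => rw [mE_zero]
  | succ k ih =>
    rw [mE_succ]
    simp only [ih]
    rw [ENNReal.tsum_mul_right, Ke_norm hK0 hK1, one_mul]

lemma mE_mono (k : ℕ) (x : E) {F G : (Fin k → E) → ℝ≥0∞} (h : ∀ y, F y ≤ G y) :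
    mE K k x F ≤ mE K k x G :=
  Summable.tsum_le_tsum (fun y => mul_le_mul_right (h y) _) ENNReal.summable ENNReal.summable

lemma mE_add (k : ℕ) (x : E) (F G : (Fin k → E) → ℝ≥0∞) :
    mE K k x (fun y => F y + G y) = mE K k x F + mE K k x G := by
  simp only [mE, mul_add]
  exact ENNReal.tsum_add

lemma mE_const_mul (k : ℕ) (x : E) (c : ℝ≥0∞) (F : (Fin k → E) → ℝ≥0∞) :
    mE K k x (fun y => c * F y) = c * mE K k x F := by
  simp only [mE, ← ENNReal.tsum_mul_left]
  exact tsum_congr fun y => by ring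

lemma mE_finsum {ι : Type*} (s : Finset ι) (k : ℕ) (x : E) (F : ι → (Fin k → E) → ℝ≥0∞) :
    mE K k x (fun y => ∑ m ∈ s, F m y) = ∑ m ∈ s, mE K k x (F m) := by
  simp only [mE, Finset.mul_sum]
  exact Summable.tsum_finsetSum fun _ _ => ENNReal.summable

lemma init_cons (k : ℕ) (z : E) (t : Fin (k+1) → E) :
    (Fin.init (Fin.cons z t : Fin (k+2) → E) : Fin (k+1) → E) = Fin.cons z (Fin.init t) := by
  funext i
  induction i using Fin.cases with
  | zero => simp [Fin.init]
  | succ j => simp [Fin.init, ← Fin.succ_castSucc]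

lemma mE_init (hK0 : ∀ x y, 0 ≤ K x y) (hK1 : ∀ x, ∑' y, K x y = 1) (k : ℕ) (x : E)
    (F : (Fin k → E) → ℝ≥0∞) :
    mE K (k+1) x (fun y => F (Fin.init y)) = mE K k x F := by
  induction k generalizing x with
  | zero =>
    rw [mE_succ, mE_zero]
    have : ∀ z : E, (fun t : Fin 0 → E => F (Fin.init (Fin.cons z t : Fin 1 → E))) = fun _ => F Fin.elim0 := by
      intro z; funext t; congr 1; exact funext fun i => i.elim0
    simp only [this, mE_const hK0 hK1]
    rw [ENNReal.tsum_mul_right, Ke_norm hK0 hK1, one_mul]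
  | succ k ih =>
    rw [mE_succ, mE_succ K k x F]
    refine tsum_congr fun z => ?_
    congr 1
    have h2 : (fun t : Fin (k+1) → E => F (Fin.init (Fin.cons z t : Fin (k+2) → E)))
        = fun t => F (Fin.cons z (Fin.init t)) := by
      funext t; rw [init_cons]
    rw [h2]
    exact ih z (fun u => F (Fin.cons z u))


lemma sum_pc_succ (j m : ℕ) (g' : Fin (j+1) → ℝ≥0∞) :
    ∑ T ∈ powersetCard (m+1) (univ : Finset (Fin (j+1))), ∏ n ∈ T, g' n
      = (∑ T ∈ powersetCard (m+1) (univ : Finset (Fin j)), ∏ n ∈ T, g' n.succ)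
        + g' 0 * ∑ T ∈ powersetCard m (univ : Finset (Fin j)), ∏ n ∈ T, g' n.succ := by
  classical
  set e : Fin j ↪ Fin (j+1) := ⟨Fin.succ, Fin.succ_injective _⟩ with he
  set s : Finset (Fin (j+1)) := (univ : Finset (Fin j)).map e with hs
  have h0 : (0 : Fin (j+1)) ∉ s := by
    simp [hs, he, Fin.succ_ne_zero]
  have huniv : (univ : Finset (Fin (j+1))) = insert 0 s := by
    rw [Fin.univ_succ, Finset.cons_eq_insert]
  have hnot : ∀ T ∈ powersetCard (m+1) s ∪ powersetCard m s, (0 : Fin (j+1)) ∉ T := by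
    intro T hT h0T
    rcases Finset.mem_union.mp hT with h | h <;>
      exact h0 ((Finset.mem_powersetCard.mp h).1 h0T)
  rw [huniv, Finset.powersetCard_succ_insert h0, Finset.sum_union]
  · congr 1
    · rw [hs, Finset.powersetCard_map, Finset.sum_map]
      refine Finset.sum_congr rfl fun T _ => ?_
      rw [show (Finset.mapEmbedding (e : Fin j ↪ Fin (j+1))).toEmbedding T = T.map e from rfl]
      simp only [Finset.prod_map, Function.Embedding.coeFn_mk, he]
    · have hinj : ∀ T₁ ∈ powersetCard m s, ∀ T₂ ∈ powersetCard m s,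
          insert (0 : Fin (j+1)) T₁ = insert 0 T₂ → T₁ = T₂ := by
        intro T₁ h₁ T₂ h₂ h
        have e₁ := hnot T₁ (Finset.mem_union_right _ h₁)
        have e₂ := hnot T₂ (Finset.mem_union_right _ h₂)
        rw [← Finset.erase_insert e₁, ← Finset.erase_insert e₂, h]
      rw [Finset.sum_image hinj]
      have : ∀ T ∈ powersetCard m s, ∏ n ∈ insert (0 : Fin (j+1)) T, g' n
          = g' 0 * ∏ n ∈ T, g' n := fun T hT =>
        Finset.prod_insert (hnot T (Finset.mem_union_right _ hT))
      rw [Finset.sum_congr rfl this, ← Finset.mul_sum]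
      congr 1
      rw [hs, Finset.powersetCard_map, Finset.sum_map]
      refine Finset.sum_congr rfl fun T _ => ?_
      rw [show (Finset.mapEmbedding (e : Fin j ↪ Fin (j+1))).toEmbedding T = T.map e from rfl]
      simp only [Finset.prod_map, Function.Embedding.coeFn_mk, he]
  · rw [Finset.disjoint_left]
    intro T hT hT'
    obtain ⟨T', hT'mem, rfl⟩ := Finset.mem_image.mp hT'
    exact hnot _ (Finset.mem_union_left _ hT) (Finset.mem_insert_self _ _)

noncomputable def AA (K : E → E → ℝ) (g : E → ℝ≥0∞) (m j : ℕ) (x : E) : ℝ≥0∞ :=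
  mE K j x (fun y => ∑ T ∈ powersetCard m (univ : Finset (Fin j)), ∏ n ∈ T, g (y n))

noncomputable def BB (K : E → E → ℝ) (g : E → ℝ≥0∞) (j : ℕ) (x : E) : ℝ≥0∞ :=
  mE K j x (fun y => ∑ n, g (y n))

variable {g : E → ℝ≥0∞}

lemma AA_zero (hK0 : ∀ x y, 0 ≤ K x y) (hK1 : ∀ x, ∑' y, K x y = 1) (j : ℕ) (x : E) :
    AA K g 0 j x = 1 := by
  rw [AA]
  have : (fun y : Fin j → E =>
      ∑ T ∈ powersetCard 0 (univ : Finset (Fin j)), ∏ n ∈ T, g (y n)) = fun _ => 1 := by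
    funext y; rw [Finset.powersetCard_zero, Finset.sum_singleton, Finset.prod_empty]
  rw [this, mE_const hK0 hK1]

lemma AA_one (j : ℕ) (x : E) : AA K g 1 j x = BB K g j x := by
  rw [AA, BB]
  congr 1
  funext y
  simp only [Finset.powersetCard_one, Finset.sum_map, Function.Embedding.coeFn_mk,
    Finset.prod_singleton]

lemma AA_rec (m j : ℕ) (x : E) :
    AA K g (m+1) (j+1) x
      = ∑' z, Ke K x z * (AA K g (m+1) j z + g z * AA K g m j z) := by
  rw [AA, mE_succ]
  refine tsum_congr fun z => ?_
  congr 1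
  beta_reduce
  have h : (fun t : Fin j → E =>
      ∑ T ∈ powersetCard (m+1) (univ : Finset (Fin (j+1))), ∏ n ∈ T, g ((Fin.cons z t : Fin (j+1) → E) n))
      = fun t => (∑ T ∈ powersetCard (m+1) (univ : Finset (Fin j)), ∏ n ∈ T, g (t n))
          + g z * ∑ T ∈ powersetCard m (univ : Finset (Fin j)), ∏ n ∈ T, g (t n) := by
    funext t
    rw [sum_pc_succ j m (fun n => g ((Fin.cons z t : Fin (j+1) → E) n))]
    simp only [Fin.cons_zero, Fin.cons_succ]
  rw [h, mE_add, mE_const_mul]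
  rfl

lemma BB_rec (hK0 : ∀ x y, 0 ≤ K x y) (hK1 : ∀ x, ∑' y, K x y = 1) (j : ℕ) (x : E) :
    BB K g (j+1) x = ∑' z, Ke K x z * (g z + BB K g j z) := by
  rw [BB, mE_succ]
  refine tsum_congr fun z => ?_
  congr 1
  beta_reduce
  have h : (fun t : Fin j → E => ∑ n : Fin (j+1), g ((Fin.cons z t : Fin (j+1) → E) n))
      = fun t => g z + ∑ n : Fin j, g (t n) := by
    funext t
    rw [Fin.sum_univ_succ]
    simp only [Fin.cons_zero, Fin.cons_succ]
  rw [h, mE_add, mE_const hK0 hK1]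
  rfl

lemma BB_mono (hK0 : ∀ x y, 0 ≤ K x y) (hK1 : ∀ x, ∑' y, K x y = 1) (j : ℕ) (x : E) :
    BB K g j x ≤ BB K g (j+1) x := by
  rw [BB, ← mE_init hK0 hK1 j x (fun y => ∑ n, g (y n))]
  refine mE_mono _ _ fun y => ?_
  rw [Fin.sum_univ_castSucc (f := fun n => g (y n))]
  exact le_self_add


lemma mE_ofReal (hK0 : ∀ x y, 0 ≤ K x y) (hK1 : ∀ x, ∑' y, K x y = 1) (k : ℕ) (x : E)
    (F : (Fin k → E) → ℝ) (hF0 : ∀ y, 0 ≤ F y) (C : ℝ) (hFC : ∀ y, F y ≤ C) :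
    ENNReal.ofReal (markovExp K k x F) = mE K k x (fun y => ENNReal.ofReal (F y)) := by
  set w : (Fin k → E) → ℝ :=
    fun y => ∏ i : Fin k, K ((Fin.cons x y : Fin (k+1) → E) i.castSucc) (y i) with hw
  have hw0 : ∀ y, 0 ≤ w y := fun y => Finset.prod_nonneg fun i _ => hK0 _ _
  have hwE : ∀ y, wE K k x y = ENNReal.ofReal (w y) := fun y =>
    (ENNReal.ofReal_prod_of_nonneg fun i _ => hK0 _ _).symm
  have hsum1 : ∑' y, wE K k x y = 1 := by
    have := mE_const hK0 hK1 (K := K) k x 1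
    simpa [mE] using this
  have hsw : Summable w := by
    have h := ENNReal.summable_toReal (f := wE K k x) (by rw [hsum1]; exact ENNReal.one_ne_top)
    refine h.congr fun y => ?_
    rw [hwE, ENNReal.toReal_ofReal (hw0 y)]
  have hsF : Summable (fun y => w y * F y) :=
    Summable.of_nonneg_of_le (fun y => mul_nonneg (hw0 y) (hF0 y))
      (fun y => mul_le_mul_of_nonneg_left (hFC y) (hw0 y)) (hsw.mul_right C)
  rw [show markovExp K k x F = ∑' y, w y * F y from rfl,
    show mE K k x (fun y => ENNReal.ofReal (F y))
      = ∑' y, wE K k x y * ENNReal.ofReal (F y) from rfl,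
    ENNReal.ofReal_tsum_of_nonneg (fun y => mul_nonneg (hw0 y) (hF0 y)) hsF]
  exact tsum_congr fun y => by rw [ENNReal.ofReal_mul (hw0 y), hwE]

lemma exp_le_one_add {t : ℝ} (h0 : 0 ≤ t) (h1 : t ≤ 1) :
    Real.exp t ≤ 1 + Real.exp 1 * t := by
  have h := convexOn_exp.2 (Set.mem_univ (0:ℝ)) (Set.mem_univ (1:ℝ))
    (by linarith : (0:ℝ) ≤ 1 - t) h0 (by ring)
  simp only [smul_eq_mul, mul_zero, mul_one, zero_add, Real.exp_zero] at h
  have : Real.exp t ≤ (1 - t) * 1 + t * Real.exp 1 := by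
    simpa using h
  nlinarith [Real.exp_pos 1]

end KhasAux

open scoped ENNReal in
open KhasAux in
/-- Corollary of the discrete Khas'minskii lemma for `f : E → [0,1]`: if
`η₁ = sup_x E_x[Σ_{n=1}^k f(Y_n)] < 1` and `e·η₁ < 1`, then
`sup_x E_x[exp(Σ_{n=1}^k f(Y_n))] ≤ 1/(1 − e·η₁)`. -/
theorem discrete_khasminskii_cor {E : Type*} [Countable E] (K : E → E → ℝ)
    (hK0 : ∀ x y, 0 ≤ K x y) (hK1 : ∀ x, ∑' y, K x y = 1)
    (f : E → ℝ) (hf : ∀ x, f x ∈ Set.Icc (0 : ℝ) 1) (k : ℕ) (η₁ : ℝ) (hη : η₁ < 1)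
    (hbound : ∀ x : E, markovExp K k x (fun y => ∑ n : Fin k, f (y n)) ≤ η₁)
    (he : Real.exp 1 * η₁ < 1) :
    ∀ x : E,
      markovExp K k x (fun y => Real.exp (∑ n : Fin k, f (y n))) ≤
        1 / (1 - Real.exp 1 * η₁) := by
  intro x
  classical
  have hη0 : 0 ≤ η₁ := by
    refine le_trans ?_ (hbound x)
    exact tsum_nonneg fun y => mul_nonneg (Finset.prod_nonneg fun i _ => hK0 _ _)
      (Finset.sum_nonneg fun n _ => (hf _).1)
  set g : E → ℝ≥0∞ := fun z => ENNReal.ofReal (f z) with hg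
  set ηE : ℝ≥0∞ := ENNReal.ofReal η₁ with hηE
  set eE : ℝ≥0∞ := ENNReal.ofReal (Real.exp 1) with heE
  have hsum_le : ∀ (j : ℕ) (y : Fin j → E), ∑ n : Fin j, f (y n) ≤ (j : ℝ) := by
    intro j y
    calc ∑ n : Fin j, f (y n) ≤ ∑ _n : Fin j, (1:ℝ) :=
          Finset.sum_le_sum fun n _ => (hf _).2
      _ = (j : ℝ) := by simp
  have hof_sum : ∀ (j : ℕ) (y : Fin j → E),
      ENNReal.ofReal (∑ n : Fin j, f (y n)) = ∑ n : Fin j, g (y n) := fun j y =>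
    ENNReal.ofReal_sum_of_nonneg fun n _ => (hf _).1
  -- bound on BB at horizon k
  have hBk : ∀ z, BB K g k z ≤ ηE := by
    intro z
    have h1 := mE_ofReal hK0 hK1 k z (fun y => ∑ n : Fin k, f (y n))
      (fun y => Finset.sum_nonneg fun n _ => (hf _).1) (k : ℝ) (hsum_le k)
    have h2 : BB K g k z = ENNReal.ofReal (markovExp K k z (fun y => ∑ n : Fin k, f (y n))) := by
      rw [h1, BB]
      exact congrArg _ (funext fun y => (hof_sum k y).symm)
    rw [h2]
    exact ENNReal.ofReal_le_ofReal (hbound z)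
  have hB : ∀ j, j ≤ k → ∀ z, BB K g j z ≤ ηE := by
    intro j hj z
    have step : ∀ d : ℕ, BB K g j z ≤ BB K g (j + d) z := by
      intro d
      induction d with
      | zero => exact le_refl _
      | succ d ih => exact ih.trans (BB_mono hK0 hK1 (j + d) z)
    have := step (k - j)
    rw [Nat.add_sub_cancel' hj] at this
    exact this.trans (hBk z)
  -- main Khas'minskii induction
  have hA : ∀ m, ∀ j, j ≤ k → ∀ z, AA K g (m+1) j z ≤ ηE ^ m * BB K g j z := by
    intro m
    induction m with
    | zero =>
      intro j hj z
      rw [pow_zero, one_mul, AA_one]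
    | succ m ih =>
      intro j
      induction j with
      | zero =>
        intro hj z
        have hempty : AA K g (m+2) 0 z = 0 := by
          rw [AA]
          have h0 : powersetCard (m+2) (univ : Finset (Fin 0)) = ∅ := by
            rw [Finset.powersetCard_eq_empty]
            simp
          simp [h0, mE]
          right; intro i hi; have := Finset.card_le_univ i; rw [Fintype.card_fin] at this; omega
        rw [hempty]
        exact zero_le
      | succ j ihj =>
        intro hj z
        have hj' : j ≤ k := Nat.le_of_succ_le hj
        rw [AA_rec, BB_rec hK0 hK1]
        have hstep : ∀ z' : E,
            Ke K z z' * (AA K g (m+2) j z' + g z' * AA K g (m+1) j z')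
              ≤ ηE ^ (m+1) * (Ke K z z' * (g z' + BB K g j z')) := by
          intro z'
          have hA2 : AA K g (m+2) j z' ≤ ηE ^ (m+1) * BB K g j z' := ihj hj' z'
          have hA1 : AA K g (m+1) j z' ≤ ηE ^ (m+1) := by
            calc AA K g (m+1) j z' ≤ ηE ^ m * BB K g j z' := ih j hj' z'
              _ ≤ ηE ^ m * ηE := mul_le_mul_right (hB j hj' z') _
              _ = ηE ^ (m+1) := (pow_succ _ _).symm
          calc Ke K z z' * (AA K g (m+2) j z' + g z' * AA K g (m+1) j z')
              ≤ Ke K z z' * (ηE ^ (m+1) * BB K g j z' + g z' * ηE ^ (m+1)) :=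
                mul_le_mul_right (add_le_add hA2 (mul_le_mul_right hA1 _)) _
            _ = ηE ^ (m+1) * (Ke K z z' * (g z' + BB K g j z')) := by ring
        calc ∑' z', Ke K z z' * (AA K g (m+2) j z' + g z' * AA K g (m+1) j z')
            ≤ ∑' z', ηE ^ (m+1) * (Ke K z z' * (g z' + BB K g j z')) :=
              Summable.tsum_le_tsum hstep ENNReal.summable ENNReal.summable
          _ = ηE ^ (m+1) * ∑' z', Ke K z z' * (g z' + BB K g j z') := ENNReal.tsum_mul_left
  have hAle : ∀ m, AA K g m k x ≤ ηE ^ m := by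
    intro m
    cases m with
    | zero => rw [AA_zero hK0 hK1, pow_zero]
    | succ m =>
      calc AA K g (m+1) k x ≤ ηE ^ m * BB K g k x := hA m k le_rfl x
        _ ≤ ηE ^ m * ηE := mul_le_mul_right (hBk x) _
        _ = ηE ^ (m+1) := (pow_succ _ _).symm
  -- pointwise exponential bound
  have hpt : ∀ y : Fin k → E,
      ENNReal.ofReal (Real.exp (∑ n : Fin k, f (y n)))
        ≤ ∑ m ∈ Finset.range (k+1),
            eE ^ m * ∑ T ∈ powersetCard m (univ : Finset (Fin k)), ∏ n ∈ T, g (y n) := by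
    intro y
    rw [Real.exp_sum, ENNReal.ofReal_prod_of_nonneg fun n _ => (Real.exp_pos _).le]
    calc ∏ n : Fin k, ENNReal.ofReal (Real.exp (f (y n)))
        ≤ ∏ n : Fin k, (1 + eE * g (y n)) := by
          refine Finset.prod_le_prod' fun n _ => ?_
          have h1 := exp_le_one_add (hf (y n)).1 (hf (y n)).2
          calc ENNReal.ofReal (Real.exp (f (y n)))
              ≤ ENNReal.ofReal (1 + Real.exp 1 * f (y n)) := ENNReal.ofReal_le_ofReal h1
            _ = 1 + eE * g (y n) := by
                rw [ENNReal.ofReal_add zero_le_one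
                  (mul_nonneg (Real.exp_pos 1).le (hf (y n)).1), ENNReal.ofReal_one,
                  ENNReal.ofReal_mul (Real.exp_pos 1).le]
      _ = ∑ T ∈ (univ : Finset (Fin k)).powerset, ∏ n ∈ T, (eE * g (y n)) := by
          have h := Finset.prod_add (fun n : Fin k => eE * g (y n))
            (fun _ => (1 : ℝ≥0∞)) univ
          simp only [Finset.prod_const_one, mul_one] at h
          rw [← h]
          exact Finset.prod_congr rfl fun n _ => add_comm _ _
      _ = ∑ m ∈ Finset.range (k+1),
            ∑ T ∈ powersetCard m (univ : Finset (Fin k)), ∏ n ∈ T, (eE * g (y n)) := by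
          rw [Finset.sum_powerset, Finset.card_fin]
      _ = ∑ m ∈ Finset.range (k+1),
            eE ^ m * ∑ T ∈ powersetCard m (univ : Finset (Fin k)), ∏ n ∈ T, g (y n) := by
          refine Finset.sum_congr rfl fun m _ => ?_
          rw [Finset.mul_sum]
          refine Finset.sum_congr rfl fun T hT => ?_
          rw [Finset.prod_mul_distrib, Finset.prod_const,
            (Finset.mem_powersetCard.mp hT).2]
  -- combine
  have key : mE K k x (fun y => ENNReal.ofReal (Real.exp (∑ n : Fin k, f (y n))))
      ≤ (1 - eE * ηE)⁻¹ := by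
    calc mE K k x (fun y => ENNReal.ofReal (Real.exp (∑ n : Fin k, f (y n))))
        ≤ mE K k x (fun y => ∑ m ∈ Finset.range (k+1),
            eE ^ m * ∑ T ∈ powersetCard m (univ : Finset (Fin k)), ∏ n ∈ T, g (y n)) :=
          mE_mono _ _ hpt
      _ = ∑ m ∈ Finset.range (k+1), eE ^ m * AA K g m k x := by
          rw [mE_finsum]
          exact Finset.sum_congr rfl fun m _ => mE_const_mul _ _ _ _
      _ ≤ ∑ m ∈ Finset.range (k+1), (eE * ηE) ^ m := by
          refine Finset.sum_le_sum fun m _ => ?_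
          rw [mul_pow]
          exact mul_le_mul_right (hAle m) _
      _ ≤ ∑' m : ℕ, (eE * ηE) ^ m := ENNReal.sum_le_tsum _
      _ = (1 - eE * ηE)⁻¹ := ENNReal.tsum_geometric _
  -- back to the reals
  have hpos : (0:ℝ) < 1 - Real.exp 1 * η₁ := by linarith
  have hofR : ENNReal.ofReal (markovExp K k x (fun y => Real.exp (∑ n : Fin k, f (y n))))
      ≤ ENNReal.ofReal (1 / (1 - Real.exp 1 * η₁)) := by
    rw [mE_ofReal hK0 hK1 k x _ (fun y => (Real.exp_pos _).le) (Real.exp (k : ℝ))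
      (fun y => Real.exp_le_exp.2 (hsum_le k y))]
    refine key.trans_eq ?_
    have h1 : eE * ηE = ENNReal.ofReal (Real.exp 1 * η₁) :=
      (ENNReal.ofReal_mul (Real.exp_pos 1).le).symm
    rw [h1, show (1:ℝ≥0∞) = ENNReal.ofReal 1 from ENNReal.ofReal_one.symm,
      ← ENNReal.ofReal_sub 1 (mul_nonneg (Real.exp_pos 1).le hη0),
      ← ENNReal.ofReal_inv_of_pos hpos, one_div]
  exact (ENNReal.ofReal_le_ofReal_iff (by positivity)).mp hofR
end

section
/- For two independent simple random walks on Z^2 started at 0, and any n ≥ 1 and β > 0 with σ² = e^{β²} − 1, E^{⊗2}[exp(β² Σ_{k=1}^n 1{S_k^1 = S_k^2})] ≤ 1/(1 − σ² R_n), provided σ² R_n < 1, where R_n = Σ_{s=1}^n p_{2s}(0). -/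
open Finset

/-- Position at time `k` of the simple random walk started at `0` with moves `m`. -/
def pos0 (n : ℕ) (m : Fin n → Fin 4) (k : ℕ) : ℤ × ℤ :=
  ∑ i ∈ Finset.univ.filter (fun i : Fin n => (i : ℕ) < k), dir (m i)

/-- Expectation over two independent `n`-step simple random walks started at `0`. -/
noncomputable def E2 (n : ℕ) (F : (Fin n → Fin 4) → (Fin n → Fin 4) → ℝ) : ℝ :=
  (∑ m₁ : Fin n → Fin 4, ∑ m₂ : Fin n → Fin 4, F m₁ m₂) / (4 ^ n * 4 ^ n)

/-- Expected intersection local time `R_n = Σ_{s=1}^n p_{2s}(0)`. -/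
noncomputable def R (n : ℕ) : ℝ := ∑ s ∈ Finset.Icc 1 n, p (2 * s) 0

/-! ### Auxiliary development -/

/-- Negation of a step, as an index. -/
def nstep : Fin 4 → Fin 4 := ![1,0,3,2]

lemma dir_nstep (a : Fin 4) : dir (nstep a) = - dir a := by
  fin_cases a <;> simp [dir, nstep]

lemma nstep_nstep (a : Fin 4) : nstep (nstep a) = a := by
  fin_cases a <;> rfl

/-- Step of the difference walk. -/
def vstep (c : Fin 4 × Fin 4) : ℤ × ℤ := dir c.1 - dir c.2

/-- Partial sum of the difference walk. -/
def psum (n : ℕ) (m : Fin n → Fin 4 × Fin 4) (k : ℕ) : ℤ × ℤ :=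
  ∑ i ∈ Finset.univ.filter (fun i : Fin n => (i : ℕ) < k), vstep (m i)

/-- Indicator of an intersection at time `k`. -/
noncomputable def ind (n : ℕ) (m : Fin n → Fin 4 × Fin 4) (k : ℕ) : ℝ :=
  if psum n m k = 0 then 1 else 0

/-- The (unnormalized) second moment sum. -/
noncomputable def Q (c : ℝ) (n : ℕ) : ℝ :=
  ∑ m : Fin n → Fin 4 × Fin 4, ∏ k ∈ Finset.Icc 1 n, (1 + c * ind n m k)

/-- Count of difference walks returning to `0` at time `t`. -/
noncomputable def Nt (t : ℕ) : ℝ := ∑ w : Fin t → Fin 4 × Fin 4, ind t w t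

lemma ind_nonneg (n m k) : 0 ≤ ind n m k := by
  unfold ind; split <;> norm_num

lemma one_add_ind_nonneg {c : ℝ} (hc : 0 ≤ c) (n m k) : 0 ≤ 1 + c * ind n m k := by
  have := ind_nonneg n m k; positivity

/-- Pointwise chaos expansion, grouping by the minimal element. -/
lemma expand (c : ℝ) (I : ℕ → ℝ) : ∀ (n a : ℕ),
    ∏ k ∈ Finset.Icc a n, (1 + c * I k)
      = 1 + ∑ t ∈ Finset.Icc a n, c * I t * ∏ k ∈ Finset.Icc (t+1) n, (1 + c * I k) := by
  intro n
  induction n with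
  | zero =>
    intro a
    rcases Nat.eq_zero_or_pos a with rfl | ha
    · simp
    · rw [Finset.Icc_eq_empty (by omega)]; simp
  | succ n ih =>
    intro a
    rcases le_or_gt a (n+1) with ha | ha
    · rw [Finset.prod_Icc_succ_top ha, Finset.sum_Icc_succ_top ha, ih a]
      have hsum : ∑ t ∈ Finset.Icc a n, c * I t * ∏ k ∈ Finset.Icc (t+1) (n+1), (1 + c * I k)
          = (∑ t ∈ Finset.Icc a n, c * I t * ∏ k ∈ Finset.Icc (t+1) n, (1 + c * I k))
              * (1 + c * I (n+1)) := by
        rw [Finset.sum_mul]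
        refine Finset.sum_congr rfl fun t ht => ?_
        rw [Finset.prod_Icc_succ_top (by simp at ht; omega)]
        ring
      rw [hsum]
      rw [Finset.Icc_eq_empty (by omega : ¬ (n+1+1) ≤ (n+1))]
      simp only [Finset.prod_empty]
      ring
    · rw [Finset.Icc_eq_empty (by omega)]
      simp
  
lemma psum_full (t : ℕ) (w : Fin t → Fin 4 × Fin 4) : psum t w t = ∑ i, vstep (w i) := by
  unfold psum
  congr 1
  exact Finset.filter_true_of_mem fun i _ => i.isLt

/-- The combined walk built from two segments. -/
def comb {t r : ℕ} (w : Fin t → Fin 4 × Fin 4) (m' : Fin r → Fin 4 × Fin 4) :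
    Fin (t + r) → Fin 4 × Fin 4 :=
  Sum.elim w m' ∘ finSumFinEquiv.symm

lemma comb_castAdd {t r : ℕ} (w : Fin t → Fin 4 × Fin 4) (m' : Fin r → Fin 4 × Fin 4)
    (i : Fin t) : comb w m' (Fin.castAdd r i) = w i := by
  simp [comb]

lemma comb_natAdd {t r : ℕ} (w : Fin t → Fin 4 × Fin 4) (m' : Fin r → Fin 4 × Fin 4)
    (j : Fin r) : comb w m' (Fin.natAdd t j) = m' j := by
  simp [comb]

lemma psum_comb_le {t r : ℕ} (w : Fin t → Fin 4 × Fin 4) (m' : Fin r → Fin 4 × Fin 4)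
    (k : ℕ) (hk : k ≤ t) : psum (t+r) (comb w m') k = psum t w k := by
  have h0 : psum (t+r) (comb w m') k
      = (∑ i : Fin t, if (i : ℕ) < k then vstep (w i) else 0)
        + (∑ i : Fin r, if t + (i : ℕ) < k then vstep (m' i) else 0) := by
    unfold psum
    rw [Finset.sum_filter]
    rw [Fin.sum_univ_add (f := fun i : Fin (t+r) => if (i : ℕ) < k then vstep (comb w m' i) else 0)]
    simp only [Fin.coe_castAdd, Fin.coe_natAdd, comb_castAdd, comb_natAdd]
  rw [h0]
  have : ∀ i : Fin r, (if t + (i : ℕ) < k then vstep (m' i) else 0) = 0 := by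
    intro i; rw [if_neg (by omega)]
  rw [Finset.sum_congr rfl fun i _ => this i]
  unfold psum
  rw [Finset.sum_filter]
  simp

lemma psum_comb_ge {t r : ℕ} (w : Fin t → Fin 4 × Fin 4) (m' : Fin r → Fin 4 × Fin 4)
    (j : ℕ) : psum (t+r) (comb w m') (t + j) = psum t w t + psum r m' j := by
  have h0 : psum (t+r) (comb w m') (t+j)
      = (∑ i : Fin t, if (i : ℕ) < t + j then vstep (w i) else 0)
        + (∑ i : Fin r, if t + (i : ℕ) < t + j then vstep (m' i) else 0) := by
    unfold psum
    rw [Finset.sum_filter]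
    rw [Fin.sum_univ_add (f := fun i : Fin (t+r) => if (i : ℕ) < t + j then vstep (comb w m' i) else 0)]
    simp only [Fin.coe_castAdd, Fin.coe_natAdd, comb_castAdd, comb_natAdd]
  rw [h0]
  congr 1
  · rw [psum_full]
    exact Finset.sum_congr rfl fun i _ => if_pos (by omega)
  · unfold psum
    rw [Finset.sum_filter]
    exact Finset.sum_congr rfl fun i _ => by simp only [add_lt_add_iff_left]

/-- The reindexing equivalence for splitting a walk at time `t`. -/
def combEquiv (t r : ℕ) :
    ((Fin t → Fin 4 × Fin 4) × (Fin r → Fin 4 × Fin 4)) ≃ (Fin (t+r) → Fin 4 × Fin 4) :=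
  (Equiv.sumArrowEquivProdArrow _ _ _).symm.trans
    (Equiv.arrowCongr finSumFinEquiv (Equiv.refl _))

lemma combEquiv_apply (t r : ℕ) (w : Fin t → Fin 4 × Fin 4) (m' : Fin r → Fin 4 × Fin 4) :
    combEquiv t r (w, m') = comb w m' := rfl

/-- Markov property: restarting after a return to zero at time `t`. -/
lemma markov (c : ℝ) (t r : ℕ) :
    (∑ m : Fin (t+r) → Fin 4 × Fin 4,
        ind (t+r) m t * ∏ k ∈ Finset.Icc (t+1) (t+r), (1 + c * ind (t+r) m k))
      = Nt t * Q c r := by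
  classical
  rw [← Equiv.sum_comp (combEquiv t r) (fun m => ind (t+r) m t *
      ∏ k ∈ Finset.Icc (t+1) (t+r), (1 + c * ind (t+r) m k)), Fintype.sum_prod_type]
  have hterm : ∀ (w : Fin t → Fin 4 × Fin 4) (m' : Fin r → Fin 4 × Fin 4),
      ind (t+r) (combEquiv t r (w, m')) t
          * ∏ k ∈ Finset.Icc (t+1) (t+r), (1 + c * ind (t+r) (combEquiv t r (w, m')) k)
        = ind t w t * ∏ k ∈ Finset.Icc 1 r, (1 + c * ind r m' k) := by
    intro w m'
    rw [combEquiv_apply]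
    have hIcc : Finset.Icc (t+1) (t+r) = (Finset.Icc 1 r).map (addLeftEmbedding t) := by
      rw [Finset.map_add_left_Icc]
    rw [hIcc, Finset.prod_map]
    have hind : ind (t+r) (comb w m') t = ind t w t := by
      unfold ind; rw [psum_comb_le w m' t le_rfl]
    rw [hind]
    by_cases hw : psum t w t = 0
    · congr 1
      refine Finset.prod_congr rfl fun j _ => ?_
      unfold ind
      rw [show (addLeftEmbedding t) j = t + j from rfl, psum_comb_ge, hw, zero_add]
    · simp [ind, hw]
  calc ∑ w : Fin t → Fin 4 × Fin 4, ∑ m' : Fin r → Fin 4 × Fin 4,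
        ind (t+r) (combEquiv t r (w, m')) t
          * ∏ k ∈ Finset.Icc (t+1) (t+r), (1 + c * ind (t+r) (combEquiv t r (w, m')) k)
      = ∑ w : Fin t → Fin 4 × Fin 4, ∑ m' : Fin r → Fin 4 × Fin 4,
        ind t w t * ∏ k ∈ Finset.Icc 1 r, (1 + c * ind r m' k) := by
        refine Finset.sum_congr rfl fun w _ => Finset.sum_congr rfl fun m' _ => hterm w m'
    _ = Nt t * Q c r := by
        rw [Nt, Q, Finset.sum_mul]
        refine Finset.sum_congr rfl fun w _ => ?_
        rw [Finset.mul_sum]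

lemma markov' (c : ℝ) (t n : ℕ) (htn : t ≤ n) :
    (∑ m : Fin n → Fin 4 × Fin 4,
        ind n m t * ∏ k ∈ Finset.Icc (t+1) n, (1 + c * ind n m k))
      = Nt t * Q c (n - t) := by
  obtain ⟨r, rfl⟩ := Nat.exists_eq_add_of_le htn
  simpa [Nat.add_sub_cancel_left] using markov c t r

/-- Forward map: a pair-walk of length `t` gives a single walk of length `2t`
(the second half reversed in sign). -/
def pairToWalk (t : ℕ) (w : Fin t → Fin 4 × Fin 4) (j : Fin (2*t)) : Fin 4 :=
  Sum.elim (fun i => (w i).1) (fun i => nstep (w i).2)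
    (finSumFinEquiv.symm (Fin.cast (two_mul t) j))

lemma pairToWalk_castAdd (t : ℕ) (w : Fin t → Fin 4 × Fin 4) (i : Fin t) :
    pairToWalk t w (Fin.cast (two_mul t).symm (Fin.castAdd t i)) = (w i).1 := by
  unfold pairToWalk
  rw [show Fin.cast (two_mul t) (Fin.cast (two_mul t).symm (Fin.castAdd t i)) = Fin.castAdd t i
    from Fin.ext (by simp)]
  rw [finSumFinEquiv_symm_apply_castAdd]
  rfl

lemma pairToWalk_natAdd (t : ℕ) (w : Fin t → Fin 4 × Fin 4) (i : Fin t) :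
    pairToWalk t w (Fin.cast (two_mul t).symm (Fin.natAdd t i)) = nstep (w i).2 := by
  unfold pairToWalk
  rw [show Fin.cast (two_mul t) (Fin.cast (two_mul t).symm (Fin.natAdd t i)) = Fin.natAdd t i
    from Fin.ext (by simp)]
  rw [finSumFinEquiv_symm_apply_natAdd]
  rfl

/-- Inverse map. -/
def walkToPair (t : ℕ) (u : Fin (2*t) → Fin 4) (i : Fin t) : Fin 4 × Fin 4 :=
  (u (Fin.cast (two_mul t).symm (Fin.castAdd t i)),
   nstep (u (Fin.cast (two_mul t).symm (Fin.natAdd t i))))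

/-- The reflection equivalence. -/
def negSnd (t : ℕ) : (Fin t → Fin 4 × Fin 4) ≃ (Fin (2*t) → Fin 4) where
  toFun := pairToWalk t
  invFun := walkToPair t
  left_inv w := by
    funext i
    show (pairToWalk t w (Fin.cast (two_mul t).symm (Fin.castAdd t i)),
      nstep (pairToWalk t w (Fin.cast (two_mul t).symm (Fin.natAdd t i)))) = w i
    rw [pairToWalk_castAdd, pairToWalk_natAdd, nstep_nstep]
  right_inv u := by
    funext j
    have hgoal : pairToWalk t (walkToPair t u) j
        = Sum.elim (fun i => (walkToPair t u i).1) (fun i => nstep (walkToPair t u i).2)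
            (finSumFinEquiv.symm (Fin.cast (two_mul t) j)) := rfl
    rcases h : finSumFinEquiv.symm (Fin.cast (two_mul t) j) with i | i
    · have hj : Fin.cast (two_mul t) j = Fin.castAdd t i := by
        rw [(Equiv.symm_apply_eq _).mp h, finSumFinEquiv_apply_left]
      have hj' : Fin.cast (two_mul t).symm (Fin.castAdd t i) = j :=
        Fin.ext (by rw [← hj]; simp)
      rw [hgoal, h, Sum.elim_inl]
      show u (Fin.cast (two_mul t).symm (Fin.castAdd t i)) = u j
      rw [hj']
    · have hj : Fin.cast (two_mul t) j = Fin.natAdd t i := by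
        rw [(Equiv.symm_apply_eq _).mp h, finSumFinEquiv_apply_right]
      have hj' : Fin.cast (two_mul t).symm (Fin.natAdd t i) = j :=
        Fin.ext (by rw [← hj]; simp)
      rw [hgoal, h, Sum.elim_inr]
      show nstep (nstep (u (Fin.cast (two_mul t).symm (Fin.natAdd t i)))) = u j
      rw [nstep_nstep, hj']

/-- Counting: the number of difference-walk returns equals the number of `2t`-step returns. -/
lemma Nt_eq (t : ℕ) : Nt t = 16 ^ t * p (2 * t) 0 := by
  classical
  have key : ∀ w : Fin t → Fin 4 × Fin 4,
      (∑ j, dir (negSnd t w j)) = 0 ↔ psum t w t = 0 := by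
    intro w
    have hre : (∑ j : Fin (2*t), dir (negSnd t w j))
        = ∑ j : Fin (t+t), dir (negSnd t w (Fin.cast (two_mul t).symm j)) := by
      rw [← Equiv.sum_comp (finCongr (two_mul t).symm) (fun j => dir (negSnd t w j))]
      rfl
    rw [hre]
    rw [Fin.sum_univ_add (f := fun j : Fin (t+t) => dir (negSnd t w (Fin.cast (two_mul t).symm j)))]
    have h1 : ∀ i : Fin t, negSnd t w (Fin.cast (two_mul t).symm (Fin.castAdd t i)) = (w i).1 :=
      fun i => pairToWalk_castAdd t w i
    have h2 : ∀ i : Fin t, negSnd t w (Fin.cast (two_mul t).symm (Fin.natAdd t i)) = nstep (w i).2 :=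
      fun i => pairToWalk_natAdd t w i
    simp only [h1, h2, dir_nstep]
    rw [psum_full]
    unfold vstep
    rw [Finset.sum_sub_distrib, sub_eq_add_neg, ← Finset.sum_neg_distrib]
  have hN : Nt t = ∑ u : Fin (2*t) → Fin 4, (if (∑ i, dir (u i)) = 0 then (1:ℝ) else 0) := by
    rw [Nt, ← Equiv.sum_comp (negSnd t) (fun u => if (∑ i, dir (u i)) = 0 then (1:ℝ) else 0)]
    refine Finset.sum_congr rfl fun w _ => ?_
    unfold ind
    by_cases h : psum t w t = 0
    · rw [if_pos h, if_pos ((key w).mpr h)]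
    · rw [if_neg h, if_neg (fun hh => h ((key w).mp hh))]
  rw [hN, p, Finset.sum_boole]
  rw [show ((4:ℝ) ^ (2*t)) = 16 ^ t by rw [pow_mul]; norm_num]
  have h16 : ((16:ℝ) ^ t) ≠ 0 := by positivity
  field_simp

/-- Recursion for `Q`. -/
lemma Q_rec (c : ℝ) (n : ℕ) :
    Q c n = 16 ^ n + c * ∑ t ∈ Finset.Icc 1 n, Nt t * Q c (n - t) := by
  classical
  have hcard : (Fintype.card (Fin n → Fin 4 × Fin 4)) = 16 ^ n := by
    simp [Fintype.card_fun]
  conv_lhs => rw [Q]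
  have hx : ∀ m : Fin n → Fin 4 × Fin 4,
      ∏ k ∈ Finset.Icc 1 n, (1 + c * ind n m k)
        = 1 + ∑ t ∈ Finset.Icc 1 n, c * ind n m t * ∏ k ∈ Finset.Icc (t+1) n, (1 + c * ind n m k) :=
    fun m => expand c (ind n m) n 1
  rw [Finset.sum_congr rfl fun m _ => hx m]
  rw [Finset.sum_add_distrib, Finset.sum_const, Finset.card_univ, hcard]
  rw [Finset.sum_comm]
  congr 1
  · simp
  rw [Finset.mul_sum]
  refine Finset.sum_congr rfl fun t ht => ?_
  simp only [Finset.mem_Icc] at ht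
  rw [← markov' c t n ht.2]
  rw [Finset.mul_sum]
  refine Finset.sum_congr rfl fun m _ => by ring

lemma p_nonneg (n : ℕ) (x : ℤ × ℤ) : 0 ≤ p n x := by
  unfold p; positivity

lemma R_nonneg (n : ℕ) : 0 ≤ R n :=
  Finset.sum_nonneg fun _ _ => p_nonneg _ _

lemma R_mono {m n : ℕ} (h : m ≤ n) : R m ≤ R n :=
  Finset.sum_le_sum_of_subset_of_nonneg (Finset.Icc_subset_Icc_right h)
    (fun _ _ _ => p_nonneg _ _)

/-- Main inductive bound. -/
lemma main_bound {c : ℝ} (hc : 0 ≤ c) (N : ℕ) (hσ : c * R N < 1) :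
    ∀ n, n ≤ N → Q c n / 16 ^ n ≤ 1 / (1 - c * R N) := by
  intro n
  induction n using Nat.strong_induction_on with
  | _ n IH =>
    intro hnN
    have hpos : (0:ℝ) < 1 - c * R N := by linarith
    have h16 : (0:ℝ) < 16 ^ n := by positivity
    rw [Q_rec]
    have hstep : ∀ t ∈ Finset.Icc 1 n, Nt t * Q c (n - t) / 16 ^ n
        ≤ p (2 * t) 0 * (1 / (1 - c * R N)) := by
      intro t ht
      simp only [Finset.mem_Icc] at ht
      have hQ : Q c (n - t) / 16 ^ (n - t) ≤ 1 / (1 - c * R N) :=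
        IH (n - t) (by omega) (by omega)
      rw [Nt_eq]
      have h16t : (0:ℝ) < 16 ^ t := by positivity
      have h16nt : (0:ℝ) < 16 ^ (n - t) := by positivity
      have hsplit : (16:ℝ) ^ n = 16 ^ t * 16 ^ (n - t) := by
        rw [← pow_add]; congr 1; omega
      rw [hsplit]
      have hrw : 16 ^ t * p (2 * t) 0 * Q c (n - t) / (16 ^ t * 16 ^ (n - t))
          = p (2 * t) 0 * (Q c (n - t) / 16 ^ (n - t)) := by
        field_simp
      rw [hrw]
      exact mul_le_mul_of_nonneg_left hQ (p_nonneg _ _)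
    calc (16 ^ n + c * ∑ t ∈ Finset.Icc 1 n, Nt t * Q c (n - t)) / 16 ^ n
        = 1 + c * ∑ t ∈ Finset.Icc 1 n, Nt t * Q c (n - t) / 16 ^ n := by
          rw [add_div, div_self (ne_of_gt h16), mul_div_assoc, Finset.sum_div]
      _ ≤ 1 + c * ∑ t ∈ Finset.Icc 1 n, p (2 * t) 0 * (1 / (1 - c * R N)) := by
          gcongr with t ht
          exact hstep t ht
      _ = 1 + c * (R n * (1 / (1 - c * R N))) := by
          have : R n * (1 / (1 - c * R N))
              = ∑ t ∈ Finset.Icc 1 n, p (2 * t) 0 * (1 / (1 - c * R N)) := by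
            simp only [R]
            rw [Finset.sum_mul]
          rw [this]
      _ ≤ 1 + c * (R N * (1 / (1 - c * R N))) := by
          have hb : (0:ℝ) ≤ 1 / (1 - c * R N) := by positivity
          gcongr
          exact R_mono hnN
      _ = 1 / (1 - c * R N) := by
          field_simp
          ring

/-- Second-moment upper bound: with `σ² = e^{β²} − 1`, if `σ² R_n < 1`, then
`E^{⊗2}[exp(β² Σ_{k=1}^n 1{S_k^1 = S_k^2})] ≤ 1/(1 − σ² R_n)`. -/
theorem second_moment_upper (n : ℕ) (hn : 1 ≤ n) (β : ℝ) (hβ : 0 < β)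
    (hσ : (Real.exp (β ^ 2) - 1) * R n < 1) :
    E2 n (fun m₁ m₂ => Real.exp (β ^ 2 * ∑ k ∈ Finset.Icc 1 n,
        if pos0 n m₁ k = pos0 n m₂ k then (1 : ℝ) else 0)) ≤
      1 / (1 - (Real.exp (β ^ 2) - 1) * R n) := by
  classical
  set c : ℝ := Real.exp (β ^ 2) - 1 with hcdef
  have hc : 0 ≤ c := by
    have h1 : (1:ℝ) ≤ Real.exp (β ^ 2) := by
      rw [← Real.exp_zero]; exact Real.exp_le_exp.mpr (by positivity)
    simp only [hcdef]; linarith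
  have hexp : ∀ (m₁ m₂ : Fin n → Fin 4),
      Real.exp (β ^ 2 * ∑ k ∈ Finset.Icc 1 n,
          if pos0 n m₁ k = pos0 n m₂ k then (1 : ℝ) else 0)
        = ∏ k ∈ Finset.Icc 1 n,
            (1 + c * if pos0 n m₁ k = pos0 n m₂ k then (1:ℝ) else 0) := by
    intro m₁ m₂
    rw [Finset.mul_sum, Real.exp_sum]
    refine Finset.prod_congr rfl fun k _ => ?_
    split_ifs with h
    · rw [mul_one, mul_one, hcdef]; ring
    · rw [mul_zero, mul_zero, add_zero, Real.exp_zero]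
  have hpair : ∀ (m₁ m₂ : Fin n → Fin 4) (k : ℕ),
      (pos0 n m₁ k = pos0 n m₂ k) ↔ psum n (fun i => (m₁ i, m₂ i)) k = 0 := by
    intro m₁ m₂ k
    rw [← sub_eq_zero]
    unfold pos0 psum vstep
    rw [← Finset.sum_sub_distrib]
  have hsum : (∑ m₁ : Fin n → Fin 4, ∑ m₂ : Fin n → Fin 4,
      Real.exp (β ^ 2 * ∑ k ∈ Finset.Icc 1 n,
        if pos0 n m₁ k = pos0 n m₂ k then (1 : ℝ) else 0)) = Q c n := by
    rw [← Fintype.sum_prod_type']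
    rw [← Equiv.sum_comp (Equiv.arrowProdEquivProdArrow (Fin n) (fun _ => Fin 4) (fun _ => Fin 4))
      (fun q : (Fin n → Fin 4) × (Fin n → Fin 4) => Real.exp (β ^ 2 * ∑ k ∈ Finset.Icc 1 n,
        if pos0 n q.1 k = pos0 n q.2 k then (1 : ℝ) else 0)), Q]
    refine Finset.sum_congr rfl fun m _ => ?_
    show Real.exp (β ^ 2 * ∑ k ∈ Finset.Icc 1 n,
        if pos0 n (fun i => (m i).1) k = pos0 n (fun i => (m i).2) k then (1 : ℝ) else 0) = _
    rw [hexp]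
    refine Finset.prod_congr rfl fun k _ => ?_
    congr 1
    congr 1
    unfold ind
    have hp := hpair (fun i => (m i).1) (fun i => (m i).2) k
    have hm : (fun i => ((m i).1, (m i).2)) = m := by funext i; rfl
    rw [hm] at hp
    by_cases h : psum n m k = 0
    · rw [if_pos (hp.mpr h), if_pos h]
    · rw [if_neg (fun hh => h (hp.mp hh)), if_neg h]
  rw [E2, hsum]
  rw [show ((4:ℝ) ^ n * 4 ^ n) = 16 ^ n by rw [← mul_pow]; norm_num]
  exact main_bound hc n hσ n le_rfl
end

section
/- For two independent planar simple random walks started at 0 with σ² = e^{β²} − 1, one has for all n ≥ 1: E^{⊗2}[exp(β² Σ_{k=1}^n 1{S_k^1=S_k^2})] ≥ (1 − (σ² R_{⌊n/log n⌋})^{⌊log n⌋+1})/(1 − σ² R_{⌊n/log n⌋}), provided σ² R_{⌊n/log n⌋} < 1. -/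
open Finset

def negDir : Fin 4 → Fin 4 := ![1,0,3,2]

lemma dir_negDir (i : Fin 4) : dir (negDir i) = - dir i := by
  fin_cases i <;> simp [dir, negDir] <;> decide

lemma negDir_negDir (i : Fin 4) : negDir (negDir i) = i := by fin_cases i <;> rfl

def tot (g : ℕ) (a : Fin g → Fin 4) : ℤ × ℤ := ∑ i, dir (a i)

lemma pos0_eq_sum_ite (n : ℕ) (m : Fin n → Fin 4) (k : ℕ) :
    pos0 n m k = ∑ i : Fin n, if (i : ℕ) < k then dir (m i) else 0 := by
  rw [pos0, Finset.sum_filter]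

lemma pos0_self (g : ℕ) (a : Fin g → Fin 4) : pos0 g a g = tot g a := by
  rw [pos0, tot, Finset.filter_true_of_mem]
  exact fun i _ => i.isLt

lemma tot_neg (g : ℕ) (a : Fin g → Fin 4) : tot g (negDir ∘ a) = - tot g a := by
  simp [tot, dir_negDir, Finset.sum_neg_distrib]

def join {n t u : ℕ} (h : n = t + u) (a : Fin t → Fin 4) (b : Fin u → Fin 4) :
    Fin n → Fin 4 := fun i => Fin.append a b (Fin.cast h i)

lemma sum_join {n t u : ℕ} (h : n = t + u) (f : (Fin n → Fin 4) → ℝ) :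
    ∑ m : Fin n → Fin 4, f m
      = ∑ a : Fin t → Fin 4, ∑ b : Fin u → Fin 4, f (join h a b) := by
  subst h
  rw [← (Fin.appendEquiv t u).sum_comp f, Fintype.sum_prod_type]
  refine Finset.sum_congr rfl fun a _ => Finset.sum_congr rfl fun b _ => congrArg f ?_
  funext i
  show Fin.append a b i = Fin.append a b (Fin.cast _ i)
  congr 1

lemma join_castAdd {n t u : ℕ} (h : n = t + u) (a : Fin t → Fin 4) (b : Fin u → Fin 4)
    (i : Fin t) : join h a b (Fin.cast h.symm (Fin.castAdd u i)) = a i := by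
  subst h; simp [join]

lemma pos0_join {n t u : ℕ} (h : n = t + u) (a : Fin t → Fin 4) (b : Fin u → Fin 4)
    (k : ℕ) : pos0 n (join h a b) k
      = (∑ i : Fin t, if (i : ℕ) < k then dir (a i) else 0)
        + ∑ i : Fin u, if t + (i : ℕ) < k then dir (b i) else 0 := by
  subst h
  rw [pos0_eq_sum_ite]
  have : ∀ i : Fin (t + u), join rfl a b i = Fin.append a b i := by
    intro i; simp [join, Fin.cast]
  simp only [this]
  rw [Fin.sum_univ_add]
  congr 1
  · exact Finset.sum_congr rfl fun i _ => by simp [Fin.append_left]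
  · exact Finset.sum_congr rfl fun i _ => by simp [Fin.append_right]

lemma pos0_join_le {n t u : ℕ} (h : n = t + u) (a : Fin t → Fin 4) (b : Fin u → Fin 4)
    {k : ℕ} (hk : k ≤ t) : pos0 n (join h a b) k = pos0 t a k := by
  rw [pos0_join, pos0_eq_sum_ite]
  have : ∀ i : Fin u, ¬ (t + (i : ℕ) < k) := fun i => by omega
  simp [this]

lemma pos0_join_add {n t u : ℕ} (h : n = t + u) (a : Fin t → Fin 4) (b : Fin u → Fin 4)
    (k : ℕ) : pos0 n (join h a b) (t + k) = tot t a + pos0 u b k := by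
  rw [pos0_join, pos0_eq_sum_ite, tot]
  congr 1
  · exact Finset.sum_congr rfl fun i _ => by
      have : (i : ℕ) < t + k := by omega
      simp [this]
  · exact Finset.sum_congr rfl fun i _ => by
      have : t + (i : ℕ) < t + k ↔ (i : ℕ) < k := by omega
      simp [this]

lemma tot_join {n t u : ℕ} (h : n = t + u) (a : Fin t → Fin 4) (b : Fin u → Fin 4) :
    tot n (join h a b) = tot t a + tot u b := by
  rw [← pos0_self]; subst h; rw [pos0_join_add, pos0_self]

def negE (t : ℕ) : (Fin t → Fin 4) ≃ (Fin t → Fin 4) :=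
  Function.Involutive.toPerm (fun a => negDir ∘ a)
    (fun a => by funext i; simp [negDir_negDir])

lemma pair_count (t : ℕ) :
    ∑ a₁ : Fin t → Fin 4, ∑ a₂ : Fin t → Fin 4,
        (if tot t a₁ = tot t a₂ then (1:ℝ) else 0)
      = 16 ^ t * p (2 * t) 0 := by
  have h2 : 2 * t = t + t := two_mul t
  have hL : ∑ c : Fin (2*t) → Fin 4, (if tot (2*t) c = 0 then (1:ℝ) else 0)
      = ∑ a₁ : Fin t → Fin 4, ∑ a₂ : Fin t → Fin 4,
          (if tot t a₁ = tot t a₂ then (1:ℝ) else 0) := by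
    rw [sum_join h2]
    refine Finset.sum_congr rfl fun a₁ _ => ?_
    rw [← (negE t).sum_comp]
    refine Finset.sum_congr rfl fun a₂ _ => ?_
    have : tot (2*t) (join h2 a₁ (negE t a₂)) = tot t a₁ - tot t a₂ := by
      rw [tot_join]
      show tot t a₁ + tot t (negDir ∘ a₂) = _
      rw [tot_neg]; ring
    rw [this]
    simp [sub_eq_zero]
  rw [← hL]
  have hc : ∑ c : Fin (2*t) → Fin 4, (if tot (2*t) c = 0 then (1:ℝ) else 0)
      = ((Finset.univ.filter
          (fun m : Fin (2*t) → Fin 4 => (∑ i, dir (m i)) = 0)).card : ℝ) := by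
    rw [Finset.sum_boole]
    rfl
  rw [hc, p]
  have h4 : (4:ℝ) ^ (2*t) = 16 ^ t := by
    rw [pow_mul]; norm_num
  rw [h4, mul_div_cancel₀]
  positivity

/-- partial sums of a gap vector -/
def ps {j : ℕ} (v : Fin j → ℕ) (i : Fin j) : ℕ :=
  ∑ i' : Fin j, if i' ≤ i then v i' else 0

lemma ps_zero {j : ℕ} (v : Fin (j+1) → ℕ) : ps v 0 = v 0 := by
  simp [ps, Fin.sum_univ_succ, Fin.le_zero_iff, Fin.succ_ne_zero]

lemma ps_succ {j : ℕ} (v : Fin (j+1) → ℕ) (i : Fin j) :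
    ps v i.succ = v 0 + ps (Fin.tail v) i := by
  simp [ps, Fin.sum_univ_succ, Fin.succ_le_succ_iff, Fin.tail, Fin.zero_le]

lemma ps_strictMono {j : ℕ} {v : Fin j → ℕ} (hv : ∀ i, 1 ≤ v i) :
    StrictMono (ps v) := by
  intro i i' hii
  refine Finset.sum_lt_sum (fun k _ => ?_) ⟨i', Finset.mem_univ _, ?_⟩
  · split_ifs with h1 h2
    · rfl
    · exact absurd (h1.trans hii.le) h2
    · exact Nat.zero_le _
    · rfl
  · rw [if_neg (by exact fun h => absurd hii (not_lt.mpr h)), if_pos le_rfl]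
    exact hv i'

lemma one_le_ps {j : ℕ} {v : Fin j → ℕ} (hv : ∀ i, 1 ≤ v i) (i : Fin j) :
    1 ≤ ps v i := by
  calc 1 ≤ v i := hv i
  _ = (if i ≤ i then v i else 0) := by rw [if_pos le_rfl]
  _ ≤ ps v i := Finset.single_le_sum (f := fun i' => if i' ≤ i then v i' else 0)
      (fun k _ => by positivity) (Finset.mem_univ i)

lemma ps_le_sum {j : ℕ} (v : Fin j → ℕ) (i : Fin j) : ps v i ≤ ∑ i', v i' := by
  refine Finset.sum_le_sum fun k _ => ?_
  split_ifs <;> omega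

lemma ps_inj {j : ℕ} : ∀ {v v' : Fin j → ℕ}, ps v = ps v' → v = v' := by
  induction j with
  | zero => intro v v' _; funext i; exact i.elim0
  | succ j IH =>
    intro v v' h
    have h0 : v 0 = v' 0 := by
      have := congrFun h 0
      rwa [ps_zero, ps_zero] at this
    have ht : Fin.tail v = Fin.tail v' := by
      refine IH (funext fun i => ?_)
      have := congrFun h i.succ
      rw [ps_succ, ps_succ] at this
      omega
    funext i
    refine Fin.cases h0 (fun i => ?_) i
    exact congrFun ht i

lemma count_lemma : ∀ (j n : ℕ) (v : Fin j → ℕ), (∀ i, 1 ≤ v i) → (∑ i, v i ≤ n) →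
    ∑ m₁ : Fin n → Fin 4, ∑ m₂ : Fin n → Fin 4,
        ∏ i : Fin j, (if pos0 n m₁ (ps v i) = pos0 n m₂ (ps v i) then (1:ℝ) else 0)
      = 16 ^ n * ∏ i : Fin j, p (2 * v i) 0 := by
  intro j
  induction j with
  | zero =>
    intro n v _ _
    simp only [Finset.univ_eq_attach, Fin.prod_univ_zero, mul_one]
    rw [Finset.sum_const, Finset.sum_const]
    simp [Fintype.card_fun]
    rw [show (16:ℝ) = 4 * 4 by norm_num, mul_pow]
  | succ j IH =>
    intro n v hv hsum
    have hsplit : ∑ i, v i = v 0 + ∑ i : Fin j, Fin.tail v i := by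
      rw [Fin.sum_univ_succ]; rfl
    set t := v 0 with ht
    have htn : t ≤ n := by
      have : t ≤ ∑ i, v i := by rw [hsplit]; omega
      omega
    set u := n - t with hu
    have h : n = t + u := by omega
    have hsum' : ∑ i : Fin j, Fin.tail v i ≤ u := by omega
    have hv' : ∀ i, 1 ≤ Fin.tail v i := fun i => hv i.succ
    -- the inner (b-walk) sum for fixed outer walks
    have key : ∀ a₁ a₂ : Fin t → Fin 4,
        (∑ b₁ : Fin u → Fin 4, ∑ b₂ : Fin u → Fin 4,
          ∏ i : Fin (j+1), (if pos0 n (join h a₁ b₁) (ps v i)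
              = pos0 n (join h a₂ b₂) (ps v i) then (1:ℝ) else 0))
        = (if tot t a₁ = tot t a₂ then (1:ℝ) else 0)
            * (16 ^ u * ∏ i : Fin j, p (2 * Fin.tail v i) 0) := by
      intro a₁ a₂
      have hrw : ∀ b₁ b₂ : Fin u → Fin 4,
          (∏ i : Fin (j+1), (if pos0 n (join h a₁ b₁) (ps v i)
              = pos0 n (join h a₂ b₂) (ps v i) then (1:ℝ) else 0))
          = (if tot t a₁ = tot t a₂ then (1:ℝ) else 0)
            * ∏ i : Fin j, (if tot t a₁ + pos0 u b₁ (ps (Fin.tail v) i)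
                = tot t a₂ + pos0 u b₂ (ps (Fin.tail v) i) then (1:ℝ) else 0) := by
        intro b₁ b₂
        rw [Fin.prod_univ_succ]
        congr 1
        · rw [ps_zero, ← ht, pos0_join_le h a₁ b₁ le_rfl, pos0_join_le h a₂ b₂ le_rfl,
            pos0_self, pos0_self]
        · refine Finset.prod_congr rfl fun i _ => ?_
          rw [ps_succ, ← ht, pos0_join_add, pos0_join_add]
      simp only [hrw]
      by_cases heq : tot t a₁ = tot t a₂
      · simp only [heq, if_pos, add_right_inj, one_mul]
        exact IH u (Fin.tail v) hv' hsum'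
      · simp [heq]
    calc ∑ m₁ : Fin n → Fin 4, ∑ m₂ : Fin n → Fin 4,
        ∏ i : Fin (j+1), (if pos0 n m₁ (ps v i) = pos0 n m₂ (ps v i) then (1:ℝ) else 0)
        = ∑ a₁ : Fin t → Fin 4, ∑ b₁ : Fin u → Fin 4, ∑ a₂ : Fin t → Fin 4,
            ∑ b₂ : Fin u → Fin 4,
            ∏ i : Fin (j+1), (if pos0 n (join h a₁ b₁) (ps v i)
                = pos0 n (join h a₂ b₂) (ps v i) then (1:ℝ) else 0) := by
          rw [sum_join h]
          exact Finset.sum_congr rfl fun a₁ _ => Finset.sum_congr rfl fun b₁ _ =>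
            sum_join h _
      _ = ∑ a₁ : Fin t → Fin 4, ∑ a₂ : Fin t → Fin 4, ∑ b₁ : Fin u → Fin 4,
            ∑ b₂ : Fin u → Fin 4,
            ∏ i : Fin (j+1), (if pos0 n (join h a₁ b₁) (ps v i)
                = pos0 n (join h a₂ b₂) (ps v i) then (1:ℝ) else 0) := by
          exact Finset.sum_congr rfl fun a₁ _ => Finset.sum_comm
      _ = ∑ a₁ : Fin t → Fin 4, ∑ a₂ : Fin t → Fin 4,
            (if tot t a₁ = tot t a₂ then (1:ℝ) else 0)
            * (16 ^ u * ∏ i : Fin j, p (2 * Fin.tail v i) 0) := by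
          exact Finset.sum_congr rfl fun a₁ _ => Finset.sum_congr rfl fun a₂ _ =>
            key a₁ a₂
      _ = (∑ a₁ : Fin t → Fin 4, ∑ a₂ : Fin t → Fin 4,
            (if tot t a₁ = tot t a₂ then (1:ℝ) else 0))
            * (16 ^ u * ∏ i : Fin j, p (2 * Fin.tail v i) 0) := by
          rw [Finset.sum_mul]
          exact Finset.sum_congr rfl fun a₁ _ => (Finset.sum_mul _ _ _).symm
      _ = 16 ^ n * ∏ i : Fin (j+1), p (2 * v i) 0 := by
          rw [pair_count t, Fin.prod_univ_succ, h, pow_add]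
          ring_nf
          rfl

lemma pointwise_bound (n L l : ℕ) (hLl : L * l ≤ n) (s : ℝ) (hs : 0 ≤ s)
    (δ : ℕ → ℝ) (hδ : ∀ k, 0 ≤ δ k) :
    ∑ j ∈ Finset.range (L+1), ∑ v ∈ Fintype.piFinset (fun _ : Fin j => Finset.Icc 1 l),
        s ^ j * ∏ i : Fin j, δ (ps v i)
      ≤ ∏ k ∈ Finset.Icc 1 n, (s * δ k + 1) := by
  classical
  set f : ℕ → ℝ := fun k => s * δ k with hf
  have hf0 : ∀ k, 0 ≤ f k := fun k => mul_nonneg hs (hδ k)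
  -- expand the product over the powerset
  have hexp : ∏ k ∈ Finset.Icc 1 n, (s * δ k + 1)
      = ∑ A ∈ (Finset.Icc 1 n).powerset, ∏ k ∈ A, f k := by
    rw [Finset.prod_add]
    exact Finset.sum_congr rfl fun A _ => by simp [hf]
  rw [hexp]
  -- the (gap-vector ↦ subset) map
  have hmem : ∀ {j : ℕ} {v : Fin j → ℕ},
      v ∈ Fintype.piFinset (fun _ : Fin j => Finset.Icc 1 l) → ∀ i, 1 ≤ v i ∧ v i ≤ l := by
    intro j v hvmem i
    have := (Fintype.mem_piFinset.mp hvmem) i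
    exact Finset.mem_Icc.mp this
  have hcard : ∀ {j : ℕ} {v : Fin j → ℕ},
      v ∈ Fintype.piFinset (fun _ : Fin j => Finset.Icc 1 l) →
      (Finset.image (ps v) Finset.univ).card = j := by
    intro j v hvmem
    rw [Finset.card_image_of_injective _ (ps_strictMono (fun i => (hmem hvmem i).1)).injective,
      Finset.card_univ, Fintype.card_fin]
  -- rewrite each inner sum as a sum over a set of subsets
  have hstep : ∀ j ∈ Finset.range (L+1),
      ∑ v ∈ Fintype.piFinset (fun _ : Fin j => Finset.Icc 1 l),
        s ^ j * ∏ i : Fin j, δ (ps v i)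
      = ∑ A ∈ (Fintype.piFinset (fun _ : Fin j => Finset.Icc 1 l)).image
            (fun v => Finset.image (ps v) Finset.univ),
          ∏ k ∈ A, f k := by
    intro j hj
    rw [Finset.sum_image]
    · refine Finset.sum_congr rfl fun v hvmem => ?_
      have hinj := (ps_strictMono (fun i => (hmem hvmem i).1)).injective
      rw [Finset.prod_image (fun i _ i' _ hh => hinj hh)]
      show s ^ j * ∏ i : Fin j, δ (ps v i) = ∏ i : Fin j, f (ps v i)
      simp only [hf]
      rw [Finset.prod_mul_distrib, Finset.prod_const, Finset.card_univ, Fintype.card_fin]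
    · intro v hv v' hv' hh
      have h1 := hcard hv
      have hm1 : ps v = (Finset.image (ps v) Finset.univ).orderEmbOfFin h1 :=
        Finset.orderEmbOfFin_unique h1 (fun i => Finset.mem_image_of_mem _ (Finset.mem_univ i))
          (ps_strictMono (fun i => (hmem hv i).1))
      have hm2 : ps v' = (Finset.image (ps v) Finset.univ).orderEmbOfFin h1 :=
        Finset.orderEmbOfFin_unique h1
          (fun i => by
            have hh' : Finset.image (ps v) Finset.univ = Finset.image (ps v') Finset.univ := hh
            rw [hh']; exact Finset.mem_image_of_mem _ (Finset.mem_univ i))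
          (ps_strictMono (fun i => (hmem hv' i).1))
      exact ps_inj (hm1.trans hm2.symm)
  rw [Finset.sum_congr rfl hstep]
  rw [← Finset.sum_biUnion]
  · refine Finset.sum_le_sum_of_subset_of_nonneg ?_ ?_
    · intro A hA
      rw [Finset.mem_biUnion] at hA
      obtain ⟨j, hj, hA⟩ := hA
      rw [Finset.mem_image] at hA
      obtain ⟨v, hvmem, rfl⟩ := hA
      rw [Finset.mem_powerset]
      intro k hk
      rw [Finset.mem_image] at hk
      obtain ⟨i, _, rfl⟩ := hk
      have hv1 : ∀ i, 1 ≤ v i := fun i => (hmem hvmem i).1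
      rw [Finset.mem_Icc]
      refine ⟨one_le_ps hv1 i, ?_⟩
      calc ps v i ≤ ∑ i', v i' := ps_le_sum v i
        _ ≤ ∑ _i' : Fin j, l := Finset.sum_le_sum fun i' _ => (hmem hvmem i').2
        _ = j * l := by rw [Finset.sum_const, Finset.card_univ, Fintype.card_fin, smul_eq_mul]
        _ ≤ L * l := Nat.mul_le_mul_right l (Nat.lt_succ_iff.mp (Finset.mem_range.mp hj))
        _ ≤ n := hLl
    · intro A _ _
      exact Finset.prod_nonneg fun k _ => hf0 k
  · -- pairwise disjointness via cardinality
    intro j hj j' hj' hne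
    refine Finset.disjoint_left.mpr fun A hA hA' => ?_
    rw [Finset.mem_image] at hA hA'
    obtain ⟨v, hv, rfl⟩ := hA
    obtain ⟨v', hv', hAA⟩ := hA'
    have := hcard hv
    have h2 := hcard hv'
    rw [hAA] at h2
    exact hne (by omega)


/-- Second-moment lower bound: with `σ² = e^{β²} − 1`, `ℓ = ⌊n/log n⌋` and provided
`σ² R_ℓ < 1`, one has
`E^{⊗2}[exp(β² Σ_{k=1}^n 1{S_k^1=S_k^2})] ≥ (1 − (σ² R_ℓ)^{⌊log n⌋+1})/(1 − σ² R_ℓ)`. -/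
theorem second_moment_lower (n : ℕ) (hn : 1 ≤ n) (β : ℝ) (hβ : 0 < β)
    (hσ : (Real.exp (β ^ 2) - 1) * R (Nat.floor ((n : ℝ) / Real.log n)) < 1) :
    (1 - ((Real.exp (β ^ 2) - 1) * R (Nat.floor ((n : ℝ) / Real.log n)))
          ^ (Nat.floor (Real.log n) + 1)) /
        (1 - (Real.exp (β ^ 2) - 1) * R (Nat.floor ((n : ℝ) / Real.log n))) ≤
      E2 n (fun m₁ m₂ => Real.exp (β ^ 2 * ∑ k ∈ Finset.Icc 1 n,
        if pos0 n m₁ k = pos0 n m₂ k then (1 : ℝ) else 0)) := by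
  classical
  set l : ℕ := Nat.floor ((n : ℝ) / Real.log n) with hl
  set L : ℕ := Nat.floor (Real.log n) with hL
  set s : ℝ := Real.exp (β ^ 2) - 1 with hs_def
  set x : ℝ := s * R l with hx_def
  have hs : 0 ≤ s := by
    have := Real.add_one_le_exp (β ^ 2)
    have h0 : (0:ℝ) ≤ β ^ 2 := sq_nonneg β
    rw [hs_def]; linarith
  have hx0 : 0 ≤ x := mul_nonneg hs (R_nonneg l)
  have hx1 : x < 1 := hσ
  -- L * l ≤ n
  have hLl : L * l ≤ n := by
    rcases Nat.eq_zero_or_pos L with h0 | hpos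
    · simp [h0]
    · have hlog1 : (1:ℝ) ≤ Real.log n := by
        by_contra hcon
        push_neg at hcon
        have : L = 0 := by
          rw [hL]
          exact Nat.floor_eq_zero.mpr hcon
        omega
      have hlogpos : (0:ℝ) < Real.log n := by linarith
      have h1 : (L:ℝ) ≤ Real.log n := Nat.floor_le (by linarith)
      have h2 : (l:ℝ) ≤ (n:ℝ) / Real.log n := Nat.floor_le (by positivity)
      have h4 : Real.log n * ((n:ℝ) / Real.log n) = (n:ℝ) := by
        field_simp
      have h5 : ((L * l : ℕ) : ℝ) ≤ (n:ℝ) := by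
        push_cast
        calc (L:ℝ) * (l:ℝ) ≤ Real.log n * ((n:ℝ) / Real.log n) :=
              mul_le_mul h1 h2 (by positivity) (by linarith)
          _ = (n:ℝ) := h4
      exact_mod_cast h5
  -- the geometric sum
  have hgeom : (1 - x ^ (L + 1)) / (1 - x) = ∑ i ∈ Finset.range (L + 1), x ^ i := by
    rw [geom_sum_eq (ne_of_lt hx1), ← neg_div_neg_eq, neg_sub, neg_sub]
  -- expansion of powers of x
  have hxpow : ∀ j : ℕ, x ^ j
      = ∑ v ∈ Fintype.piFinset (fun _ : Fin j => Finset.Icc 1 l),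
          s ^ j * ∏ i : Fin j, p (2 * v i) 0 := by
    intro j
    rw [hx_def, mul_pow, R]
    have hpc : (∑ g ∈ Finset.Icc 1 l, p (2 * g) 0) ^ j
        = ∏ _i : Fin j, (∑ g ∈ Finset.Icc 1 l, p (2 * g) 0) := by
      rw [Finset.prod_const, Finset.card_univ, Fintype.card_fin]
    rw [hpc, Finset.prod_univ_sum, Finset.mul_sum]
  -- the main count
  have hvfacts : ∀ {j : ℕ}, j ∈ Finset.range (L+1) →
      ∀ {v : Fin j → ℕ}, v ∈ Fintype.piFinset (fun _ : Fin j => Finset.Icc 1 l) →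
      (∀ i, 1 ≤ v i) ∧ (∑ i, v i ≤ n) := by
    intro j hj v hv
    have hm : ∀ i, 1 ≤ v i ∧ v i ≤ l := by
      intro i
      exact Finset.mem_Icc.mp ((Fintype.mem_piFinset.mp hv) i)
    refine ⟨fun i => (hm i).1, ?_⟩
    calc ∑ i, v i ≤ ∑ _i : Fin j, l := Finset.sum_le_sum fun i _ => (hm i).2
      _ = j * l := by rw [Finset.sum_const, Finset.card_univ, Fintype.card_fin, smul_eq_mul]
      _ ≤ L * l := Nat.mul_le_mul_right l (Nat.lt_succ_iff.mp (Finset.mem_range.mp hj))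
      _ ≤ n := hLl
  have hkey : (∑ i ∈ Finset.range (L + 1), x ^ i) * (4 ^ n * 4 ^ n)
      = ∑ m₁ : Fin n → Fin 4, ∑ m₂ : Fin n → Fin 4,
          ∑ j ∈ Finset.range (L + 1),
            ∑ v ∈ Fintype.piFinset (fun _ : Fin j => Finset.Icc 1 l),
              s ^ j * ∏ i : Fin j,
                (if pos0 n m₁ (ps v i) = pos0 n m₂ (ps v i) then (1:ℝ) else 0) := by
    calc (∑ i ∈ Finset.range (L + 1), x ^ i) * (4 ^ n * 4 ^ n)
        = ∑ j ∈ Finset.range (L + 1),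
            ∑ v ∈ Fintype.piFinset (fun _ : Fin j => Finset.Icc 1 l),
              s ^ j * (16 ^ n * ∏ i : Fin j, p (2 * v i) 0) := by
          rw [Finset.sum_mul]
          refine Finset.sum_congr rfl fun j hj => ?_
          rw [hxpow j, Finset.sum_mul]
          refine Finset.sum_congr rfl fun v hv => ?_
          have h16 : (4:ℝ) ^ n * 4 ^ n = 16 ^ n := by
            rw [← mul_pow]; norm_num
          rw [h16]; ring
      _ = ∑ j ∈ Finset.range (L + 1),
            ∑ v ∈ Fintype.piFinset (fun _ : Fin j => Finset.Icc 1 l),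
              ∑ m₁ : Fin n → Fin 4, ∑ m₂ : Fin n → Fin 4,
              s ^ j * ∏ i : Fin j,
                (if pos0 n m₁ (ps v i) = pos0 n m₂ (ps v i) then (1:ℝ) else 0) := by
          refine Finset.sum_congr rfl fun j hj => Finset.sum_congr rfl fun v hv => ?_
          obtain ⟨hv1, hvsum⟩ := hvfacts hj hv
          rw [← count_lemma j n v hv1 hvsum]
          rw [Finset.mul_sum]
          refine Finset.sum_congr rfl fun m₁ _ => ?_
          rw [Finset.mul_sum]
      _ = ∑ m₁ : Fin n → Fin 4, ∑ m₂ : Fin n → Fin 4,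
          ∑ j ∈ Finset.range (L + 1),
            ∑ v ∈ Fintype.piFinset (fun _ : Fin j => Finset.Icc 1 l),
              s ^ j * ∏ i : Fin j,
                (if pos0 n m₁ (ps v i) = pos0 n m₂ (ps v i) then (1:ℝ) else 0) := by
          calc ∑ j ∈ Finset.range (L + 1),
              ∑ v ∈ Fintype.piFinset (fun _ : Fin j => Finset.Icc 1 l),
              ∑ m₁ : Fin n → Fin 4, ∑ m₂ : Fin n → Fin 4,
              s ^ j * ∏ i : Fin j,
                (if pos0 n m₁ (ps v i) = pos0 n m₂ (ps v i) then (1:ℝ) else 0)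
              = ∑ j ∈ Finset.range (L + 1), ∑ m₁ : Fin n → Fin 4,
                ∑ v ∈ Fintype.piFinset (fun _ : Fin j => Finset.Icc 1 l),
                ∑ m₂ : Fin n → Fin 4,
                s ^ j * ∏ i : Fin j,
                  (if pos0 n m₁ (ps v i) = pos0 n m₂ (ps v i) then (1:ℝ) else 0) :=
                Finset.sum_congr rfl fun j _ => Finset.sum_comm
            _ = ∑ j ∈ Finset.range (L + 1), ∑ m₁ : Fin n → Fin 4,
                ∑ m₂ : Fin n → Fin 4,
                ∑ v ∈ Fintype.piFinset (fun _ : Fin j => Finset.Icc 1 l),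
                s ^ j * ∏ i : Fin j,
                  (if pos0 n m₁ (ps v i) = pos0 n m₂ (ps v i) then (1:ℝ) else 0) :=
                Finset.sum_congr rfl fun j _ =>
                  Finset.sum_congr rfl fun m₁ _ => Finset.sum_comm
            _ = ∑ m₁ : Fin n → Fin 4, ∑ j ∈ Finset.range (L + 1),
                ∑ m₂ : Fin n → Fin 4,
                ∑ v ∈ Fintype.piFinset (fun _ : Fin j => Finset.Icc 1 l),
                s ^ j * ∏ i : Fin j,
                  (if pos0 n m₁ (ps v i) = pos0 n m₂ (ps v i) then (1:ℝ) else 0) :=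
                Finset.sum_comm
            _ = ∑ m₁ : Fin n → Fin 4, ∑ m₂ : Fin n → Fin 4,
                ∑ j ∈ Finset.range (L + 1),
                ∑ v ∈ Fintype.piFinset (fun _ : Fin j => Finset.Icc 1 l),
                s ^ j * ∏ i : Fin j,
                  (if pos0 n m₁ (ps v i) = pos0 n m₂ (ps v i) then (1:ℝ) else 0) :=
                Finset.sum_congr rfl fun m₁ _ => Finset.sum_comm
  -- pointwise bound
  have hpt : ∀ m₁ m₂ : Fin n → Fin 4,
      (∑ j ∈ Finset.range (L + 1),
        ∑ v ∈ Fintype.piFinset (fun _ : Fin j => Finset.Icc 1 l),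
          s ^ j * ∏ i : Fin j,
            (if pos0 n m₁ (ps v i) = pos0 n m₂ (ps v i) then (1:ℝ) else 0))
      ≤ Real.exp (β ^ 2 * ∑ k ∈ Finset.Icc 1 n,
          if pos0 n m₁ k = pos0 n m₂ k then (1:ℝ) else 0) := by
    intro m₁ m₂
    have hexp_eq : Real.exp (β ^ 2 * ∑ k ∈ Finset.Icc 1 n,
          if pos0 n m₁ k = pos0 n m₂ k then (1:ℝ) else 0)
        = ∏ k ∈ Finset.Icc 1 n,
            (s * (if pos0 n m₁ k = pos0 n m₂ k then (1:ℝ) else 0) + 1) := by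
      rw [Finset.mul_sum, Real.exp_sum]
      refine Finset.prod_congr rfl fun k _ => ?_
      by_cases hk : pos0 n m₁ k = pos0 n m₂ k
      · simp only [if_pos hk, mul_one]
        simp [hs_def]
      · simp only [if_neg hk, mul_zero]
        simp
    rw [hexp_eq]
    exact pointwise_bound n L l hLl s hs
      (fun k => if pos0 n m₁ k = pos0 n m₂ k then (1:ℝ) else 0)
      (fun k => by by_cases h : pos0 n m₁ k = pos0 n m₂ k <;> simp [h])
  -- final assembly
  rw [hgeom]
  show _ ≤ E2 n _
  rw [E2]
  have hD : (0:ℝ) < 4 ^ n * 4 ^ n := by positivity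
  rw [le_div_iff₀ hD, hkey]
  refine Finset.sum_le_sum fun m₁ _ => Finset.sum_le_sum fun m₂ _ => hpt m₁ m₂
end

section
/- Let f : [1,T] → [0,∞) be non-increasing with f(1) finite and f(T)=0, and suppose f is differentiable with f'(x) = −(1/x)·1/(1 − c·log(x)/L) for constants 0 < c < 1 and L ≥ log T. Then for every integer j ≥ 1 and v ∈ [1,T]: f(1)^j + ∫_1^v f(x)^j dx ≤ v Σ_{i=0}^j (j!/(j−i)!) (1/(1−c))^i f(v)^{j−i}. -/
open Finset intervalIntegral

/-- Iterated integration-by-parts bound: if `f : [1,T] → [0,∞)` is non-increasing with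
`f(T) = 0` and `f'(x) = −(1/x)·1/(1 − c log x / L)` on `[1,T]` (`0 < c < 1`,
`L ≥ log T`), then for every `j ≥ 1` and `v ∈ [1,T]`,
`f(1)^j + ∫_1^v f(x)^j dx ≤ v Σ_{i=0}^j (j!/(j−i)!) (1/(1−c))^i f(v)^{j−i}`. -/
theorem iterated_ibp_bound (T c L : ℝ) (hT : 1 ≤ T) (hc0 : 0 < c) (hc1 : c < 1)
    (hL : Real.log T ≤ L)
    (f : ℝ → ℝ)
    (hmono : AntitoneOn f (Set.Icc 1 T))
    (hnonneg : ∀ x ∈ Set.Icc (1 : ℝ) T, 0 ≤ f x)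
    (hfT : f T = 0)
    (hderiv : ∀ x ∈ Set.Icc (1 : ℝ) T,
      HasDerivAt f (-(1 / x) * (1 / (1 - c * Real.log x / L))) x)
    (j : ℕ) (hj : 1 ≤ j) (v : ℝ) (hv : v ∈ Set.Icc (1 : ℝ) T) :
    f 1 ^ j + ∫ x in (1 : ℝ)..v, f x ^ j ≤
      v * ∑ i ∈ Finset.range (j + 1),
        ((Nat.factorial j : ℝ) / (Nat.factorial (j - i) : ℝ)) *
          (1 / (1 - c)) ^ i * f v ^ (j - i) := by
  clear hj
  obtain ⟨hv1, hvT⟩ := hv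
  have hc' : (0:ℝ) < 1 - c := by linarith
  have hsub : Set.Icc (1:ℝ) v ⊆ Set.Icc 1 T := Set.Icc_subset_Icc le_rfl hvT
  have huIcc : Set.uIcc (1:ℝ) v = Set.Icc 1 v := Set.uIcc_of_le hv1
  have hcont : ContinuousOn f (Set.Icc 1 T) := fun x hx =>
    (hderiv x hx).continuousAt.continuousWithinAt
  set g : ℝ → ℝ := fun x => -(1/x) * (1/(1 - c * Real.log x / L)) with hg
  have hL0 : 0 ≤ L := le_trans (Real.log_nonneg hT) hL
  have hden : ∀ x ∈ Set.Icc (1:ℝ) T, 1 - c ≤ 1 - c * Real.log x / L := by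
    intro x hx
    have h0 : 0 ≤ Real.log x := Real.log_nonneg hx.1
    have h1 : Real.log x ≤ L := (Real.log_le_log (by linarith [hx.1]) hx.2).trans hL
    have h2 : c * Real.log x / L ≤ c := by
      rcases hL0.eq_or_lt with h | h
      · rw [← h, div_zero]; exact hc0.le
      · rw [div_le_iff₀ h]; nlinarith
    linarith
  have hdpos : ∀ x ∈ Set.Icc (1:ℝ) T, 0 < 1 - c * Real.log x / L := fun x hx =>
    lt_of_lt_of_le hc' (hden x hx)
  have hne : ∀ x ∈ Set.Icc (1:ℝ) T, x ≠ 0 := fun x hx => by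
    have := hx.1; intro h; rw [h] at this; linarith
  have hgc : ContinuousOn g (Set.Icc 1 T) := by
    apply ContinuousOn.mul
    · exact (continuousOn_const.div continuousOn_id hne).neg
    · apply ContinuousOn.div continuousOn_const
      · apply ContinuousOn.sub continuousOn_const
        apply ContinuousOn.div_const
        exact continuousOn_const.mul (Real.continuousOn_log.mono
          (fun x hx => hne x hx))
      · exact fun x hx => (hdpos x hx).ne'
  induction j with
  | zero =>
      simp [Nat.factorial]
  | succ j ih =>
      -- integration by parts
      have hderpow : ∀ x ∈ Set.uIcc (1:ℝ) v,
          HasDerivAt (fun y => f y ^ (j+1)) (((j+1:ℕ):ℝ) * f x ^ j * g x) x := by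
        intro x hx
        rw [huIcc] at hx
        have h := (hderiv x (hsub hx)).pow (j+1)
        have e : ((j+1:ℕ):ℝ) * f x ^ j * g x =
            ((j+1:ℕ):ℝ) * f x ^ (j+1-1) * (-(1/x) * (1/(1 - c * Real.log x / L))) := by
          simp only [hg, Nat.add_sub_cancel]
        rw [e]
        exact h
      have hid : ∀ x ∈ Set.uIcc (1:ℝ) v, HasDerivAt (fun y : ℝ => y) 1 x :=
        fun x _ => hasDerivAt_id x
      have hintg : IntervalIntegrable (fun x => ((j+1:ℕ):ℝ) * f x ^ j * g x)
          MeasureTheory.volume 1 v := by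
        apply ContinuousOn.intervalIntegrable
        rw [huIcc]
        exact (continuousOn_const.mul ((hcont.mono hsub).pow j)).mul (hgc.mono hsub)
      have hibp := intervalIntegral.integral_mul_deriv_eq_deriv_mul hderpow hid hintg
        intervalIntegrable_const
      simp only [mul_one] at hibp
      -- bound on the IBP integral
      have hmonoI : (∫ x in (1:ℝ)..v, -((((j+1:ℕ):ℝ) * f x ^ j * g x) * x)) ≤
          ∫ x in (1:ℝ)..v, ((j+1:ℕ):ℝ) * (1/(1-c)) * f x ^ j := by
        apply intervalIntegral.integral_mono_on hv1
        · apply ContinuousOn.intervalIntegrable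
          rw [huIcc]
          exact (((continuousOn_const.mul ((hcont.mono hsub).pow j)).mul
            (hgc.mono hsub)).mul continuousOn_id).neg
        · apply ContinuousOn.intervalIntegrable
          rw [huIcc]
          exact continuousOn_const.mul ((hcont.mono hsub).pow j)
        · intro x hx
          have hx0 : (0:ℝ) < x := lt_of_lt_of_le one_pos hx.1
          have hfx : 0 ≤ f x := hnonneg x (hsub hx)
          have h1 : -((((j+1:ℕ):ℝ) * f x ^ j * g x) * x) =
              ((j+1:ℕ):ℝ) * f x ^ j * (1/(1 - c*Real.log x/L)) := by
            simp only [hg]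
            have hxx : (1:ℝ)/x * x = 1 := one_div_mul_cancel hx0.ne'
            calc -(((j+1:ℕ):ℝ) * f x ^ j * (-(1/x) * (1/(1 - c * Real.log x / L))) * x)
                = ((j+1:ℕ):ℝ) * f x ^ j * (1/(1 - c * Real.log x / L)) * (1/x * x) := by ring
              _ = ((j+1:ℕ):ℝ) * f x ^ j * (1/(1 - c * Real.log x / L)) := by rw [hxx, mul_one]
          rw [h1]
          have h2 := one_div_le_one_div_of_le hc' (hden x (hsub hx))
          have h3 : ((j+1:ℕ):ℝ) * f x ^ j * (1/(1 - c*Real.log x/L)) ≤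
              ((j+1:ℕ):ℝ) * f x ^ j * (1/(1-c)) :=
            mul_le_mul_of_nonneg_left h2 (by positivity)
          linarith [h3]
      rw [intervalIntegral.integral_neg] at hmonoI
      rw [intervalIntegral.integral_const_mul] at hmonoI
      -- use induction hypothesis
      have h0 : 0 ≤ f 1 ^ j := pow_nonneg (hnonneg 1 ⟨le_refl 1, hT⟩) j
      have hIj : (∫ x in (1:ℝ)..v, f x ^ j) ≤
          v * ∑ i ∈ Finset.range (j + 1),
          ((Nat.factorial j : ℝ) / (Nat.factorial (j - i) : ℝ)) *
            (1 / (1 - c)) ^ i * f v ^ (j - i) := by linarith [ih]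
      have hCpos : (0:ℝ) ≤ ((j+1:ℕ):ℝ) * (1/(1-c)) := by positivity
      have h4 := mul_le_mul_of_nonneg_left hIj hCpos
      -- final algebraic identity
      have hfinal : v * ∑ i ∈ Finset.range (j + 1 + 1),
          ((Nat.factorial (j+1) : ℝ) / (Nat.factorial (j + 1 - i) : ℝ)) *
            (1 / (1 - c)) ^ i * f v ^ (j + 1 - i)
          = v * f v ^ (j+1) + ((j+1:ℕ):ℝ) * (1/(1-c)) *
            (v * ∑ i ∈ Finset.range (j + 1),
              ((Nat.factorial j : ℝ) / (Nat.factorial (j - i) : ℝ)) *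
                (1 / (1 - c)) ^ i * f v ^ (j - i)) := by
        rw [Finset.sum_range_succ']
        have hterm : ∀ i ∈ Finset.range (j+1),
            ((Nat.factorial (j+1) : ℝ) / (Nat.factorial (j + 1 - (i+1)) : ℝ)) *
              (1 / (1 - c)) ^ (i+1) * f v ^ (j + 1 - (i+1))
            = ((j+1:ℕ):ℝ) * (1/(1-c)) *
              (((Nat.factorial j : ℝ) / (Nat.factorial (j - i) : ℝ)) *
                (1 / (1 - c)) ^ i * f v ^ (j - i)) := by
          intro i hi
          have hji : j + 1 - (i+1) = j - i := by omega
          rw [hji]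
          have hfact : ((Nat.factorial (j+1) : ℕ) : ℝ) = ((j+1:ℕ):ℝ) * (Nat.factorial j : ℝ) := by
            rw [Nat.factorial_succ]; push_cast; ring
          rw [hfact, pow_succ]
          ring
        rw [Finset.sum_congr rfl hterm, ← Finset.mul_sum]
        have hsd : ((Nat.factorial (j+1) : ℝ) / (Nat.factorial (j + 1 - 0) : ℝ)) = 1 := by
          simp [div_self, Nat.cast_ne_zero, Nat.factorial_ne_zero]
        simp only [Nat.sub_zero] at hsd ⊢
        rw [hsd]
        ring
      calc f 1 ^ (j+1) + ∫ x in (1:ℝ)..v, f x ^ (j+1)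
          ≤ v * f v ^ (j+1) + ((j+1:ℕ):ℝ) * (1/(1-c)) *
            (v * ∑ i ∈ Finset.range (j + 1),
              ((Nat.factorial j : ℝ) / (Nat.factorial (j - i) : ℝ)) *
                (1 / (1 - c)) ^ i * f v ^ (j - i)) := by
            rw [hibp]; linarith
        _ = _ := hfinal.symm
end

section
/- Define recursively c_0^1 = 1, c_1^1 = 2, c_i^{k+1} = c_i^k + 2γ_k Σ_{j=0}^{i−1} c_j^k for 0 ≤ i ≤ k+1 (with c_i^k = 0 for i > k), where γ_k ∈ {0,1} for each k. Then for all k ≥ 1 and 0 ≤ i ≤ k: c_i^k ≤ 3^i Π_{r=1}^{k−1} (1 + γ_r). -/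
open Finset

/-- Bound on the recursively defined coefficients `c_i^k`:
`c_0^1 = 1`, `c_1^1 = 2`, `c_i^{k+1} = c_i^k + 2 γ_k Σ_{j<i} c_j^k`, `c_i^k = 0` for
`i > k`, with `γ_k ∈ {0,1}`. Then `c_i^k ≤ 3^i Π_{r=1}^{k−1} (1 + γ_r)` for all
`k ≥ 1` and `i ≤ k`. -/
theorem coeff_bound (c : ℕ → ℕ → ℝ) (γ : ℕ → ℝ)
    (hγ : ∀ k, γ k = 0 ∨ γ k = 1)
    (h10 : c 1 0 = 1) (h11 : c 1 1 = 2)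
    (hzero : ∀ k i, k < i → c k i = 0)
    (hrec : ∀ k, 1 ≤ k → ∀ i, i ≤ k + 1 →
      c (k + 1) i = c k i + 2 * γ k * ∑ j ∈ Finset.range i, c k j) :
    ∀ k, 1 ≤ k → ∀ i, i ≤ k →
      c k i ≤ 3 ^ i * ∏ r ∈ Finset.Icc 1 (k - 1), (1 + γ r) := by
  have hP : ∀ m, (0:ℝ) ≤ ∏ r ∈ Finset.Icc 1 m, (1 + γ r) := by
    intro m
    apply Finset.prod_nonneg
    intro r _
    rcases hγ r with h | h <;> rw [h] <;> norm_num
  intro k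
  induction k with
  | zero => omega
  | succ n ih =>
    intro _ i hi
    rcases Nat.eq_zero_or_pos n with hn | hn
    · subst hn
      interval_cases i <;> simp [h10, h11] <;> norm_num
    · have hrec' := hrec n hn i hi
      have hsum : ∑ j ∈ Finset.range i, c n j ≤
          (∏ r ∈ Finset.Icc 1 (n - 1), (1 + γ r)) * ((3 ^ i - 1) / 2) := by
        have hgeo : ∑ j ∈ Finset.range i, (3:ℝ) ^ j = (3 ^ i - 1) / 2 := by
          rw [geom_sum_eq (by norm_num)]; ring
        calc ∑ j ∈ Finset.range i, c n j
            ≤ ∑ j ∈ Finset.range i, 3 ^ j * ∏ r ∈ Finset.Icc 1 (n - 1), (1 + γ r) := by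
              apply Finset.sum_le_sum
              intro j hj
              have hjn : j ≤ n := by
                have := Finset.mem_range.mp hj; omega
              exact ih hn j hjn
          _ = (∏ r ∈ Finset.Icc 1 (n - 1), (1 + γ r)) * ((3 ^ i - 1) / 2) := by
              rw [← Finset.sum_mul, hgeo]; ring
      have hci : c n i ≤ 3 ^ i * ∏ r ∈ Finset.Icc 1 (n - 1), (1 + γ r) := by
        rcases Nat.lt_or_ge n i with h | h
        · rw [hzero n i h]
          exact mul_nonneg (by positivity) (hP (n-1))
        · exact ih hn i h
      have hprod : ∏ r ∈ Finset.Icc 1 (n + 1 - 1), (1 + γ r)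
          = (∏ r ∈ Finset.Icc 1 (n - 1), (1 + γ r)) * (1 + γ n) := by
        have e1 : n + 1 - 1 = (n - 1) + 1 := by omega
        have e2 : n - 1 + 1 = n := by omega
        rw [e1, Finset.prod_Icc_succ_top (by omega), e2]
      rw [hrec', hprod]
      have h3i : (1:ℝ) ≤ 3 ^ i := one_le_pow₀ (by norm_num)
      have hPn := hP (n - 1)
      rcases hγ n with h | h <;> rw [h] <;> nlinarith [hsum, hci]
end
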